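/- arXiv:2105.13339 — 11 statements merged into one kernel-verified Lean document; each statement's English description precedes it below -/
import Mathlib

section
/- For every Z ∈ m and every natural number n, ad_{JZ}^{2n} = -J ∘ ad_Z^{2n} ∘ J as ℂ-linear maps from m to m. -/
/-- For every Z ∈ m and every natural number n,
ad_{JZ}^{2n} = -J ∘ ad_Z^{2n} ∘ J as ℂ-linear maps from m to m. -/
theorem statement1
    (L : Type*) [LieRing L] [LieAlgebra ℂ L] [Module.Finite ℂ L]
    (k mp mn : Submodule ℂ L)
    (hsup : k ⊔ (mp ⊔ mn) = ⊤)
    (hd1 : Disjoint k (mp ⊔ mn))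
    (hd2 : Disjoint mp mn)
    (hkk : ∀ x ∈ k, ∀ y ∈ k, ⁅x, y⁆ ∈ k)
    (hkp : ∀ x ∈ k, ∀ y ∈ mp, ⁅x, y⁆ ∈ mp)
    (hkn : ∀ x ∈ k, ∀ y ∈ mn, ⁅x, y⁆ ∈ mn)
    (hpp : ∀ x ∈ mp, ∀ y ∈ mp, ⁅x, y⁆ = 0)
    (hnn : ∀ x ∈ mn, ∀ y ∈ mn, ⁅x, y⁆ = 0)
    (hpn : ∀ x ∈ mp, ∀ y ∈ mn, ⁅x, y⁆ ∈ k)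
    (J : L →ₗ[ℂ] L)
    (hJp : ∀ x ∈ mp, J x = Complex.I • x)
    (hJn : ∀ x ∈ mn, J x = -(Complex.I • x))
    (Z : L) (hZ : Z ∈ mp ⊔ mn) (n : ℕ) :
    ∀ W ∈ mp ⊔ mn,
      ((LieAlgebra.ad ℂ L (J Z)) ^ (2 * n)) W =
        -(J (((LieAlgebra.ad ℂ L Z) ^ (2 * n)) (J W))) := by
  -- derived bracket facts
  have hpk : ∀ x ∈ mp, ∀ y ∈ k, ⁅x, y⁆ ∈ mp := by
    intro x hx y hy
    rw [← lie_skew]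
    exact Submodule.neg_mem _ (hkp y hy x hx)
  have hnk : ∀ x ∈ mn, ∀ y ∈ k, ⁅x, y⁆ ∈ mn := by
    intro x hx y hy
    rw [← lie_skew]
    exact Submodule.neg_mem _ (hkn y hy x hx)
  have hnp : ∀ x ∈ mn, ∀ y ∈ mp, ⁅x, y⁆ ∈ k := by
    intro x hx y hy
    rw [← lie_skew]
    exact Submodule.neg_mem _ (hpn y hy x hx)
  -- J facts
  have hJmem : ∀ W ∈ mp ⊔ mn, J W ∈ mp ⊔ mn := by
    intro W hW
    obtain ⟨wp, hwp, wn, hwn, rfl⟩ := Submodule.mem_sup.mp hW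
    rw [map_add, hJp wp hwp, hJn wn hwn]
    exact Submodule.add_mem _ (Submodule.mem_sup_left (Submodule.smul_mem _ _ hwp))
      (Submodule.neg_mem _ (Submodule.mem_sup_right (Submodule.smul_mem _ _ hwn)))
  have hJJ : ∀ W ∈ mp ⊔ mn, J (J W) = -W := by
    intro W hW
    obtain ⟨wp, hwp, wn, hwn, rfl⟩ := Submodule.mem_sup.mp hW
    simp only [map_add, map_neg, map_smul, hJp wp hwp, hJn wn hwn, smul_neg,
      smul_smul, Complex.I_mul_I, neg_smul, one_smul, neg_neg]
    abel
  -- decompose Z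
  obtain ⟨zp, hzp, zn, hzn, rfl⟩ := Submodule.mem_sup.mp hZ
  -- ad Z squared maps m to m
  have hadM : ∀ W ∈ mp ⊔ mn, ((LieAlgebra.ad ℂ L (zp + zn)) ^ 2) W ∈ mp ⊔ mn := by
    intro W hW
    obtain ⟨wp, hwp, wn, hwn, rfl⟩ := Submodule.mem_sup.mp hW
    have hK1 : ⁅zp, wn⁆ ∈ k := hpn zp hzp wn hwn
    have hK2 : ⁅zn, wp⁆ ∈ k := hnp zn hzn wp hwp
    have e : ((LieAlgebra.ad ℂ L (zp + zn)) ^ 2) (wp + wn)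
        = ⁅zp, ⁅zp, wn⁆⁆ + ⁅zp, ⁅zn, wp⁆⁆ + (⁅zn, ⁅zp, wn⁆⁆ + ⁅zn, ⁅zn, wp⁆⁆) := by
      simp [pow_two, Module.End.mul_apply, LieAlgebra.ad_apply, lie_add, add_lie,
        hpp zp hzp wp hwp, hnn zn hzn wn hwn]
    rw [e]
    exact Submodule.add_mem _
      (Submodule.mem_sup_left (Submodule.add_mem _ (hpk zp hzp _ hK1) (hpk zp hzp _ hK2)))
      (Submodule.mem_sup_right (Submodule.add_mem _ (hnk zn hzn _ hK1) (hnk zn hzn _ hK2)))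
  have hpowM : ∀ m : ℕ, ∀ W ∈ mp ⊔ mn, ((LieAlgebra.ad ℂ L (zp + zn)) ^ (2 * m)) W ∈ mp ⊔ mn := by
    intro m
    induction m with
    | zero => intro W hW; simpa using hW
    | succ m ih =>
      intro W hW
      have h2 : 2 * (m + 1) = 2 + 2 * m := by ring
      rw [h2, pow_add, Module.End.mul_apply]
      exact hadM _ (ih W hW)
  -- the key square identity
  have hsq : ∀ W ∈ mp ⊔ mn, ((LieAlgebra.ad ℂ L (J (zp + zn))) ^ 2) W
      = -(J (((LieAlgebra.ad ℂ L (zp + zn)) ^ 2) (J W))) := by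
    intro W hW
    obtain ⟨wp, hwp, wn, hwn, rfl⟩ := Submodule.mem_sup.mp hW
    set A := ⁅zp, ⁅zp, wn⁆⁆ with hA
    set B := ⁅zp, ⁅zn, wp⁆⁆ with hB
    set C := ⁅zn, ⁅zp, wn⁆⁆ with hC
    set D := ⁅zn, ⁅zn, wp⁆⁆ with hD
    have hK1 : ⁅zp, wn⁆ ∈ k := hpn zp hzp wn hwn
    have hK2 : ⁅zn, wp⁆ ∈ k := hnp zn hzn wp hwp
    have hAm : A ∈ mp := hpk zp hzp _ hK1
    have hBm : B ∈ mp := hpk zp hzp _ hK2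
    have hCm : C ∈ mn := hnk zn hzn _ hK1
    have hDm : D ∈ mn := hnk zn hzn _ hK2
    have hJZ : J (zp + zn) = Complex.I • zp - Complex.I • zn := by
      rw [map_add, hJp zp hzp, hJn zn hzn]; abel
    have hJW : J (wp + wn) = Complex.I • wp - Complex.I • wn := by
      rw [map_add, hJp wp hwp, hJn wn hwn]; abel
    have lhs : ((LieAlgebra.ad ℂ L (J (zp + zn))) ^ 2) (wp + wn)
        = -A + B + C - D := by
      rw [hJZ]
      simp only [pow_two, Module.End.mul_apply, LieAlgebra.ad_apply, lie_add, add_lie,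
        sub_lie, lie_sub, smul_lie, lie_smul, hpp zp hzp wp hwp, hnn zn hzn wn hwn,
        smul_zero, lie_zero, zero_lie, smul_smul, Complex.I_mul_I, ← hA, ← hB, ← hC, ← hD]
      match_scalars <;> simp [Complex.I_sq]
    have rhs : ((LieAlgebra.ad ℂ L (zp + zn)) ^ 2) (J (wp + wn))
        = Complex.I • B - Complex.I • A + (Complex.I • D - Complex.I • C) := by
      rw [hJW]
      simp only [pow_two, Module.End.mul_apply, LieAlgebra.ad_apply, lie_add, add_lie,
        sub_lie, lie_sub, smul_lie, lie_smul, hpp zp hzp wp hwp, hnn zn hzn wn hwn,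
        smul_zero, lie_zero, zero_lie, ← hA, ← hB, ← hC, ← hD]
      module
    rw [lhs, rhs]
    rw [map_add, map_sub, map_sub, map_smul, map_smul, map_smul, map_smul,
      hJp A hAm, hJp B hBm, hJn C hCm, hJn D hDm]
    simp only [smul_smul, Complex.I_mul_I, smul_neg]
    match_scalars <;> simp [Complex.I_sq]
  -- main induction
  induction n with
  | zero =>
    intro W hW
    simp only [Nat.mul_zero, pow_zero, Module.End.one_apply]
    rw [hJJ W hW, neg_neg]
  | succ n ih =>
    intro W hW
    have h2 : 2 * (n + 1) = 2 + 2 * n := by ring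
    rw [h2, pow_add, pow_add, Module.End.mul_apply, Module.End.mul_apply]
    rw [ih W hW]
    have hU : ((LieAlgebra.ad ℂ L (zp + zn)) ^ (2 * n)) (J W) ∈ mp ⊔ mn :=
      hpowM n (J W) (hJmem W hW)
    set U := ((LieAlgebra.ad ℂ L (zp + zn)) ^ (2 * n)) (J W) with hUdef
    have hnegJU : -(J U) ∈ mp ⊔ mn := Submodule.neg_mem _ (hJmem U hU)
    rw [map_neg, hsq (J U) (hJmem U hU)]
    rw [hJJ U hU]
    simp
end

section
/- For every Z ∈ m, the operators ad_{JZ}² and ad_Z² commute as ℂ-linear endomorphisms of m, i.e. ad_{JZ}²(ad_Z²(W)) = ad_Z²(ad_{JZ}²(W)) for all W ∈ m. -/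
/-- Key lemma: for `P ∈ m1`, `N, w ∈ m2` (with `m1`, `m2` abelian, `⁅m1,m2⁆ ⊆ k`,
`⁅k,m1⁆ ⊆ m1`) we have `⁅P, ⁅⁅P,N⁆, ⁅P,w⁆⁆⁆ = 0`. -/
lemma key_aca (L : Type*) [LieRing L] [LieAlgebra ℂ L]
    (k m1 m2 : Submodule ℂ L)
    (h11 : ∀ x ∈ m1, ∀ y ∈ m1, ⁅x, y⁆ = 0)
    (h22 : ∀ x ∈ m2, ∀ y ∈ m2, ⁅x, y⁆ = 0)
    (h12k : ∀ x ∈ m1, ∀ y ∈ m2, ⁅x, y⁆ ∈ k)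
    (hk1 : ∀ x ∈ k, ∀ y ∈ m1, ⁅x, y⁆ ∈ m1)
    (P : L) (hP : P ∈ m1) (N w : L) (hN : N ∈ m2) (hw : w ∈ m2) :
    ⁅P, ⁅⁅P, N⁆, ⁅P, w⁆⁆⁆ = 0 := by
  have sym1 : ∀ X ∈ m1, ∀ Y ∈ m1, ∀ v : L, ⁅X, ⁅Y, v⁆⁆ = ⁅Y, ⁅X, v⁆⁆ := by
    intro X hX Y hY v
    rw [leibniz_lie X Y v, h11 X hX Y hY, zero_lie, zero_add]
  have sym2 : ∀ U ∈ m2, ∀ V ∈ m2, ⁅⁅P, U⁆, V⁆ = ⁅⁅P, V⁆, U⁆ := by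
    intro U hU V hV
    have j := lie_jacobi P U V
    rw [h22 U hU V hV, lie_zero] at j
    have h1 : ⁅U, ⁅V, P⁆⁆ = -⁅V, ⁅P, U⁆⁆ := by linear_combination (norm := abel) j
    calc ⁅⁅P, U⁆, V⁆ = -⁅V, ⁅P, U⁆⁆ := by rw [← lie_skew]
      _ = ⁅U, ⁅V, P⁆⁆ := h1.symm
      _ = -⁅U, ⁅P, V⁆⁆ := by rw [← lie_skew V P, lie_neg]
      _ = ⁅⁅P, V⁆, U⁆ := lie_skew _ _
  have E : ∀ N' ∈ m2, ∀ w' ∈ m2,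
      ⁅P, ⁅⁅P, N'⁆, ⁅P, w'⁆⁆⁆
        = ⁅⁅⁅P, N'⁆, P⁆, ⁅P, w'⁆⁆ + ⁅P, ⁅P, ⁅⁅P, w'⁆, N'⁆⁆⁆ := by
    intro N' hN' w' hw'
    have hCP : ⁅⁅P, N'⁆, P⁆ ∈ m1 := hk1 _ (h12k P hP N' hN') P hP
    calc ⁅P, ⁅⁅P, N'⁆, ⁅P, w'⁆⁆⁆
        = ⁅P, ⁅⁅⁅P, N'⁆, P⁆, w'⁆ + ⁅P, ⁅⁅P, N'⁆, w'⁆⁆⁆ := by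
          rw [← leibniz_lie]
      _ = ⁅P, ⁅⁅⁅P, N'⁆, P⁆, w'⁆⁆ + ⁅P, ⁅P, ⁅⁅P, N'⁆, w'⁆⁆⁆ := by rw [lie_add]
      _ = ⁅⁅⁅P, N'⁆, P⁆, ⁅P, w'⁆⁆ + ⁅P, ⁅P, ⁅⁅P, w'⁆, N'⁆⁆⁆ := by
          rw [sym1 P hP _ hCP w', sym2 N' hN' w' hw']
  have E1 := E N hN w hw
  have E2 := E w hw N hN
  rw [sym2 N hN w hw] at E2
  set C := ⁅P, N⁆ with hC
  set D := ⁅P, w⁆ with hD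
  set G := ⁅P, ⁅C, D⁆⁆ with hG
  have hswap : ⁅P, ⁅D, C⁆⁆ = -G := by rw [← lie_skew D C, lie_neg, hG]
  rw [hswap] at E2
  have h3 : G + G + G = 0 := by
    have e1 : G = ⁅⁅C, P⁆, D⁆ + ⁅P, ⁅P, ⁅D, N⁆⁆⁆ := E1
    have e2 : -G = ⁅⁅D, P⁆, C⁆ + ⁅P, ⁅P, ⁅D, N⁆⁆⁆ := E2
    have jj : ⁅C, ⁅P, D⁆⁆ + ⁅P, ⁅D, C⁆⁆ + ⁅D, ⁅C, P⁆⁆ = 0 := lie_jacobi C P D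
    rw [hswap] at jj
    have l1 : ⁅⁅C, P⁆, D⁆ = ⁅C, ⁅P, D⁆⁆ - ⁅P, ⁅C, D⁆⁆ := lie_lie C P D
    have l2 : ⁅⁅D, P⁆, C⁆ = ⁅D, ⁅P, C⁆⁆ - ⁅P, ⁅D, C⁆⁆ := lie_lie D P C
    have l3 : ⁅D, ⁅C, P⁆⁆ = -⁅D, ⁅P, C⁆⁆ := by rw [← lie_skew C P, lie_neg]
    rw [hswap] at l2
    linear_combination (norm := abel) e1 - e2 + jj + l1 - l2 - l3 - hG
  have h4 : (3 : ℂ) • G = 0 := by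
    rw [show (3 : ℂ) = 1 + 1 + 1 by norm_num, add_smul, add_smul, one_smul]
    exact h3
  rcases smul_eq_zero.mp h4 with h | h
  · exact absurd h (by norm_num)
  · exact h

/-- Component computation: commutation of `ad_{P-N}²` and `ad_{P+N}²` on an element of `m1`. -/
lemma comp_lemma (L : Type*) [LieRing L] [LieAlgebra ℂ L]
    (k m1 m2 : Submodule ℂ L)
    (h11 : ∀ x ∈ m1, ∀ y ∈ m1, ⁅x, y⁆ = 0)
    (h22 : ∀ x ∈ m2, ∀ y ∈ m2, ⁅x, y⁆ = 0)
    (h12k : ∀ x ∈ m1, ∀ y ∈ m2, ⁅x, y⁆ ∈ k)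
    (hk1 : ∀ x ∈ k, ∀ y ∈ m1, ⁅x, y⁆ ∈ m1)
    (hk2 : ∀ x ∈ k, ∀ y ∈ m2, ⁅x, y⁆ ∈ m2)
    (P : L) (hP : P ∈ m1) (N : L) (hN : N ∈ m2) (V : L) (hV : V ∈ m1) :
    ⁅P - N, ⁅P - N, ⁅P + N, ⁅P + N, V⁆⁆⁆⁆ = ⁅P + N, ⁅P + N, ⁅P - N, ⁅P - N, V⁆⁆⁆⁆ := by
  have h21k : ∀ x ∈ m2, ∀ y ∈ m1, ⁅x, y⁆ ∈ k := by
    intro x hx y hy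
    rw [← lie_skew]; exact k.neg_mem (h12k y hy x hx)
  have hNV : ⁅N, V⁆ ∈ k := h21k N hN V hV
  have f1 : ⁅P, V⁆ = 0 := h11 P hP V hV
  have hPNV : ⁅P, ⁅N, V⁆⁆ ∈ m1 := by
    rw [← lie_skew]; exact m1.neg_mem (hk1 _ hNV P hP)
  have f2 : ⁅P, ⁅P, ⁅N, V⁆⁆⁆ = 0 := h11 P hP _ hPNV
  have hNNV : ⁅N, ⁅N, V⁆⁆ ∈ m2 := by
    rw [← lie_skew]; exact m2.neg_mem (hk2 _ hNV N hN)
  have f3 : ⁅N, ⁅N, ⁅N, V⁆⁆⁆ = 0 := h22 N hN _ hNNV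
  have key := key_aca L k m2 m1 h22 h11 h21k hk2 N hN P V hP hV
  have f4 : ⁅N, ⁅N, ⁅P, ⁅N, V⁆⁆⁆⁆ = ⁅N, ⁅P, ⁅N, ⁅N, V⁆⁆⁆⁆ := by
    have ll : ⁅⁅N, P⁆, ⁅N, V⁆⁆ = ⁅N, ⁅P, ⁅N, V⁆⁆⁆ - ⁅P, ⁅N, ⁅N, V⁆⁆⁆ := lie_lie N P ⁅N, V⁆
    rw [ll, lie_sub] at key
    linear_combination (norm := abel) key
  simp only [lie_add, add_lie, lie_sub, sub_lie, f1, lie_zero, zero_lie, sub_zero, zero_sub,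
    zero_add, add_zero, lie_neg, neg_lie, f2, f3, neg_zero, neg_neg]
  rw [f4]
  abel

/-- For every Z ∈ m, the operators ad_{JZ}² and ad_Z² commute as ℂ-linear
endomorphisms of m: ad_{JZ}²(ad_Z²(W)) = ad_Z²(ad_{JZ}²(W)) for all W ∈ m. -/
theorem statement2
    (L : Type*) [LieRing L] [LieAlgebra ℂ L] [Module.Finite ℂ L]
    (k mp mn : Submodule ℂ L)
    (hsup : k ⊔ (mp ⊔ mn) = ⊤)
    (hd1 : Disjoint k (mp ⊔ mn))
    (hd2 : Disjoint mp mn)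
    (hkk : ∀ x ∈ k, ∀ y ∈ k, ⁅x, y⁆ ∈ k)
    (hkp : ∀ x ∈ k, ∀ y ∈ mp, ⁅x, y⁆ ∈ mp)
    (hkn : ∀ x ∈ k, ∀ y ∈ mn, ⁅x, y⁆ ∈ mn)
    (hpp : ∀ x ∈ mp, ∀ y ∈ mp, ⁅x, y⁆ = 0)
    (hnn : ∀ x ∈ mn, ∀ y ∈ mn, ⁅x, y⁆ = 0)
    (hpn : ∀ x ∈ mp, ∀ y ∈ mn, ⁅x, y⁆ ∈ k)
    (J : L →ₗ[ℂ] L)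
    (hJp : ∀ x ∈ mp, J x = Complex.I • x)
    (hJn : ∀ x ∈ mn, J x = -(Complex.I • x))
    (Z : L) (hZ : Z ∈ mp ⊔ mn) :
    ∀ W ∈ mp ⊔ mn,
      ⁅J Z, ⁅J Z, ⁅Z, ⁅Z, W⁆⁆⁆⁆ = ⁅Z, ⁅Z, ⁅J Z, ⁅J Z, W⁆⁆⁆⁆ := by
  intro W hW
  obtain ⟨P, hP, N, hN, hZeq⟩ := Submodule.mem_sup.mp hZ
  obtain ⟨W1, hW1, W2, hW2, hWeq⟩ := Submodule.mem_sup.mp hW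
  have hJZ : J Z = Complex.I • (P - N) := by
    rw [← hZeq, map_add, hJp P hP, hJn N hN, smul_sub, ← sub_eq_add_neg]
  have sq : ∀ x : L, ⁅J Z, ⁅J Z, x⁆⁆ = -⁅P - N, ⁅P - N, x⁆⁆ := by
    intro x
    rw [hJZ, smul_lie, smul_lie, lie_smul, smul_smul, Complex.I_mul_I, neg_one_smul]
  simp only [sq, lie_neg, neg_inj]
  rw [← hZeq, ← hWeq]
  have h21k : ∀ x ∈ mn, ∀ y ∈ mp, ⁅x, y⁆ ∈ k := by
    intro x hx y hy
    rw [← lie_skew]; exact k.neg_mem (hpn y hy x hx)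
  have c1 := comp_lemma L k mp mn hpp hnn hpn hkp hkn P hP N hN W1 hW1
  have c2' := comp_lemma L k mn mp hnn hpp h21k hkn hkp N hN P hP W2 hW2
  have hsub : ∀ x : L, ⁅N - P, ⁅N - P, x⁆⁆ = ⁅P - N, ⁅P - N, x⁆⁆ := by
    intro x
    rw [show N - P = -(P - N) from (neg_sub P N).symm, neg_lie, neg_lie, lie_neg, neg_neg]
  rw [add_comm N P] at c2'
  rw [hsub, hsub] at c2'
  simp only [lie_add]
  rw [c1, c2']
end

section
/- For every Z ∈ m and all natural numbers j and k, the operators ad_{JZ}^{2j} and ad_Z^{2k} commute as ℂ-linear endomorphisms of m. -/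
/-- Core bracket identity, proved from the Jacobi identity and three vanishing
hypotheses, over a ℂ-module (we need 3 to be invertible). -/
private lemma core3 {L : Type*} [LieRing L] [LieAlgebra ℂ L] {a b W : L}
    (h1 : ⁅a, W⁆ = 0) (h2 : ⁅b, ⁅b, ⁅b, W⁆⁆⁆ = 0)
    (h3 : ⁅⁅b, ⁅a, b⁆⁆, b⁆ = 0) :
    ⁅b, ⁅b, ⁅a, ⁅b, W⁆⁆⁆⁆ = ⁅b, ⁅a, ⁅b, ⁅b, W⁆⁆⁆⁆ := by
  have hba : ⁅b, a⁆ = -⁅a, b⁆ := (lie_skew b a).symm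
  -- abbreviations (as plain equations)
  -- u := ⁅b, W⁆, c := ⁅a, b⁆, r := ⁅b, c⁆, q := ⁅b, u⁆, p := ⁅a, u⁆
  -- E := ⁅b, ⁅c, u⁆⁆, LHS := ⁅b, ⁅b, p⁆⁆, RHS := ⁅b, ⁅a, q⁆⁆
  have hbq : ⁅b, ⁅b, ⁅b, W⁆⁆⁆ = 0 := h2
  have eqRHS : ⁅b, ⁅a, ⁅b, ⁅b, W⁆⁆⁆⁆ = -⁅⁅a, b⁆, ⁅b, ⁅b, W⁆⁆⁆ := by
    rw [leibniz_lie b a ⁅b, ⁅b, W⁆⁆, hba, neg_lie, hbq, lie_zero, add_zero]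
  have eqbp : ⁅b, ⁅a, ⁅b, W⁆⁆⁆ = -⁅⁅a, b⁆, ⁅b, W⁆⁆ + ⁅a, ⁅b, ⁅b, W⁆⁆⁆ := by
    rw [leibniz_lie b a ⁅b, W⁆, hba, neg_lie]
  have eqLHS : ⁅b, ⁅b, ⁅a, ⁅b, W⁆⁆⁆⁆
      = -⁅b, ⁅⁅a, b⁆, ⁅b, W⁆⁆⁆ + ⁅b, ⁅a, ⁅b, ⁅b, W⁆⁆⁆⁆ := by
    rw [eqbp, lie_add, lie_neg]
  have eqcW : ⁅⁅a, b⁆, W⁆ = ⁅a, ⁅b, W⁆⁆ := by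
    rw [lie_lie, h1, lie_zero, sub_zero]
  have eqrW : ⁅⁅b, ⁅a, b⁆⁆, W⁆ = ⁅b, ⁅a, ⁅b, W⁆⁆⁆ - ⁅⁅a, b⁆, ⁅b, W⁆⁆ := by
    rw [lie_lie, eqcW]
  have eqru : ⁅⁅b, ⁅a, b⁆⁆, ⁅b, W⁆⁆
      = ⁅b, ⁅b, ⁅a, ⁅b, W⁆⁆⁆⁆ - ⁅b, ⁅⁅a, b⁆, ⁅b, W⁆⁆⁆ := by
    rw [leibniz_lie ⁅b, ⁅a, b⁆⁆ b W, h3, zero_lie, zero_add, eqrW, lie_sub]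
  have eqE : ⁅b, ⁅⁅a, b⁆, ⁅b, W⁆⁆⁆
      = ⁅⁅b, ⁅a, b⁆⁆, ⁅b, W⁆⁆ + ⁅⁅a, b⁆, ⁅b, ⁅b, W⁆⁆⁆ := by
    rw [leibniz_lie b ⁅a, b⁆ ⁅b, W⁆]
  have hcq : ⁅⁅a, b⁆, ⁅b, ⁅b, W⁆⁆⁆ = -⁅b, ⁅a, ⁅b, ⁅b, W⁆⁆⁆⁆ := by
    rw [eqRHS, neg_neg]
  have hE := eqE
  rw [eqru, hcq, eqLHS] at hE
  -- hE now gives 3 • E = 0 for E = ⁅b, ⁅⁅a,b⁆, ⁅b,W⁆⁆⁆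
  have key : ⁅b, ⁅⁅a, b⁆, ⁅b, W⁆⁆⁆ + ⁅b, ⁅⁅a, b⁆, ⁅b, W⁆⁆⁆
      + ⁅b, ⁅⁅a, b⁆, ⁅b, W⁆⁆⁆ = 0 := by
    nth_rewrite 1 [hE]
    abel
  have hE0 : ⁅b, ⁅⁅a, b⁆, ⁅b, W⁆⁆⁆ = 0 := by
    have h3smul : (3 : ℂ) • ⁅b, ⁅⁅a, b⁆, ⁅b, W⁆⁆⁆ = 0 := by
      rw [show (3 : ℂ) = 1 + 1 + 1 by norm_num, add_smul, add_smul, one_smul, key]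
    exact (smul_eq_zero.mp h3smul).resolve_left (by norm_num)
  rw [eqLHS, hE0, neg_zero, zero_add]


/-- Powers of endomorphisms that commute on a submodule (and preserve it)
commute on it. -/
private lemma pow_comm_on {M : Type*} [AddCommMonoid M] [Module ℂ M]
    (p : Submodule ℂ M) (f g : Module.End ℂ M)
    (hf : ∀ x ∈ p, f x ∈ p) (hg : ∀ x ∈ p, g x ∈ p)
    (hfg : ∀ x ∈ p, f (g x) = g (f x)) :
    ∀ (m n : ℕ), ∀ x ∈ p, (f ^ m) ((g ^ n) x) = (g ^ n) ((f ^ m) x) := by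
  have hgpow : ∀ n, ∀ x ∈ p, (g ^ n) x ∈ p := by
    intro n
    induction n with
    | zero => intro x hx; simpa using hx
    | succ n ih =>
        intro x hx
        rw [pow_succ, Module.End.mul_apply]
        exact ih _ (hg x hx)
  have hf_gpow : ∀ n, ∀ x ∈ p, f ((g ^ n) x) = (g ^ n) (f x) := by
    intro n
    induction n with
    | zero => intro x hx; simp
    | succ n ih =>
        intro x hx
        rw [pow_succ, Module.End.mul_apply, Module.End.mul_apply,
          ih _ (hg x hx), hfg x hx]
  intro m
  induction m with
  | zero => intro n x hx; simp
  | succ m ih =>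
      intro n x hx
      rw [pow_succ, Module.End.mul_apply, Module.End.mul_apply,
        hf_gpow n x hx, ih n _ (hf x hx)]

/-- For every Z ∈ m and all natural numbers j, l, the operators
ad_{JZ}^{2j} and ad_Z^{2l} commute as ℂ-linear endomorphisms of m. -/
theorem statement3
    (L : Type*) [LieRing L] [LieAlgebra ℂ L] [Module.Finite ℂ L]
    (k mp mn : Submodule ℂ L)
    (hsup : k ⊔ (mp ⊔ mn) = ⊤)
    (hd1 : Disjoint k (mp ⊔ mn))
    (hd2 : Disjoint mp mn)
    (hkk : ∀ x ∈ k, ∀ y ∈ k, ⁅x, y⁆ ∈ k)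
    (hkp : ∀ x ∈ k, ∀ y ∈ mp, ⁅x, y⁆ ∈ mp)
    (hkn : ∀ x ∈ k, ∀ y ∈ mn, ⁅x, y⁆ ∈ mn)
    (hpp : ∀ x ∈ mp, ∀ y ∈ mp, ⁅x, y⁆ = 0)
    (hnn : ∀ x ∈ mn, ∀ y ∈ mn, ⁅x, y⁆ = 0)
    (hpn : ∀ x ∈ mp, ∀ y ∈ mn, ⁅x, y⁆ ∈ k)
    (J : L →ₗ[ℂ] L)
    (hJp : ∀ x ∈ mp, J x = Complex.I • x)
    (hJn : ∀ x ∈ mn, J x = -(Complex.I • x))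
    (Z : L) (hZ : Z ∈ mp ⊔ mn) (j l : ℕ) :
    ∀ W ∈ mp ⊔ mn,
      ((LieAlgebra.ad ℂ L (J Z)) ^ (2 * j)) (((LieAlgebra.ad ℂ L Z) ^ (2 * l)) W) =
        ((LieAlgebra.ad ℂ L Z) ^ (2 * l)) (((LieAlgebra.ad ℂ L (J Z)) ^ (2 * j)) W) := by
  obtain ⟨a, ha, b, hb, rfl⟩ := Submodule.mem_sup.mp hZ
  have hZm : a + b ∈ mp ⊔ mn :=
    Submodule.add_mem_sup ha hb
  have hJZ : J (a + b) = Complex.I • a - Complex.I • b := by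
    rw [map_add, hJp a ha, hJn b hb, sub_eq_add_neg]
  set K : L := Complex.I • a - Complex.I • b with hKdef
  have hKm : K ∈ mp ⊔ mn := by
    rw [hKdef, sub_eq_add_neg]
    exact Submodule.add_mem_sup (Submodule.smul_mem _ _ ha)
      (Submodule.neg_mem _ (Submodule.smul_mem _ _ hb))
  -- bracket of two elements of m lies in k
  have hbr_k : ∀ Y ∈ mp ⊔ mn, ∀ V ∈ mp ⊔ mn, ⁅Y, V⁆ ∈ k := by
    intro Y hY V hV
    obtain ⟨y1, hy1, y2, hy2, rfl⟩ := Submodule.mem_sup.mp hY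
    obtain ⟨v1, hv1, v2, hv2, rfl⟩ := Submodule.mem_sup.mp hV
    have e1 : ⁅y1, v1⁆ = 0 := hpp y1 hy1 v1 hv1
    have e4 : ⁅y2, v2⁆ = 0 := hnn y2 hy2 v2 hv2
    have e2 : ⁅y1, v2⁆ ∈ k := hpn y1 hy1 v2 hv2
    have e3 : ⁅y2, v1⁆ ∈ k := by
      rw [← lie_skew y2 v1]
      exact Submodule.neg_mem _ (hpn v1 hv1 y2 hy2)
    rw [add_lie, lie_add, lie_add, e1, e4, zero_add, add_zero]
    exact Submodule.add_mem _ e2 e3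
  -- bracket of an element of m with an element of k lies in m
  have hbr_m : ∀ Y ∈ mp ⊔ mn, ∀ x ∈ k, ⁅Y, x⁆ ∈ mp ⊔ mn := by
    intro Y hY x hx
    obtain ⟨y1, hy1, y2, hy2, rfl⟩ := Submodule.mem_sup.mp hY
    rw [add_lie, ← lie_skew y1 x, ← lie_skew y2 x]
    exact Submodule.add_mem _
      (Submodule.mem_sup_left (Submodule.neg_mem _ (hkp x hx y1 hy1)))
      (Submodule.mem_sup_right (Submodule.neg_mem _ (hkn x hx y2 hy2)))
  have memS : ∀ Y ∈ mp ⊔ mn, ∀ V ∈ mp ⊔ mn, ⁅Y, ⁅Y, V⁆⁆ ∈ mp ⊔ mn := by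
    intro Y hY V hV
    exact hbr_m Y hY _ (hbr_k Y hY V hV)
  -- expansions of the quadratic operators
  have hS : ∀ V : L, ⁅a + b, ⁅a + b, V⁆⁆
      = ⁅a, ⁅a, V⁆⁆ + ⁅a, ⁅b, V⁆⁆ + ⁅b, ⁅a, V⁆⁆ + ⁅b, ⁅b, V⁆⁆ := by
    intro V
    simp only [add_lie, lie_add]
    abel
  have hT : ∀ V : L, ⁅K, ⁅K, V⁆⁆
      = ⁅a, ⁅b, V⁆⁆ + ⁅b, ⁅a, V⁆⁆ - ⁅a, ⁅a, V⁆⁆ - ⁅b, ⁅b, V⁆⁆ := by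
    intro V
    rw [hKdef]
    simp only [sub_lie, lie_sub, smul_lie, lie_smul, smul_sub, smul_smul,
      Complex.I_mul_I, neg_smul, one_smul]
    abel
  -- the quadratic operators commute on mp
  have case_p : ∀ w ∈ mp,
      ⁅a + b, ⁅a + b, ⁅K, ⁅K, w⁆⁆⁆⁆ = ⁅K, ⁅K, ⁅a + b, ⁅a + b, w⁆⁆⁆⁆ := by
    intro w hw
    have haw : ⁅a, w⁆ = 0 := hpp a ha w hw
    have hu_k : ⁅b, w⁆ ∈ k := by
      rw [← lie_skew b w]; exact Submodule.neg_mem _ (hpn w hw b hb)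
    have hp_mp : ⁅a, ⁅b, w⁆⁆ ∈ mp := by
      rw [← lie_skew a ⁅b, w⁆]
      exact Submodule.neg_mem _ (hkp _ hu_k a ha)
    have hq_mn : ⁅b, ⁅b, w⁆⁆ ∈ mn := by
      rw [← lie_skew b ⁅b, w⁆]
      exact Submodule.neg_mem _ (hkn _ hu_k b hb)
    have hap : ⁅a, ⁅a, ⁅b, w⁆⁆⁆ = 0 := hpp a ha _ hp_mp
    have hbq : ⁅b, ⁅b, ⁅b, w⁆⁆⁆ = 0 := hnn b hb _ hq_mn
    have hr3 : ⁅⁅b, ⁅a, b⁆⁆, b⁆ = 0 := by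
      have hc : ⁅a, b⁆ ∈ k := hpn a ha b hb
      have hr : ⁅b, ⁅a, b⁆⁆ ∈ mn := by
        rw [← lie_skew b ⁅a, b⁆]
        exact Submodule.neg_mem _ (hkn _ hc b hb)
      exact hnn _ hr b hb
    have hcore := core3 haw hbq hr3
    have hSw : ⁅a + b, ⁅a + b, w⁆⁆ = ⁅a, ⁅b, w⁆⁆ + ⁅b, ⁅b, w⁆⁆ := by
      rw [hS w, haw]; simp
    have hTw : ⁅K, ⁅K, w⁆⁆ = ⁅a, ⁅b, w⁆⁆ - ⁅b, ⁅b, w⁆⁆ := by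
      rw [hT w, haw]; simp
    have hSp : ⁅a + b, ⁅a + b, ⁅a, ⁅b, w⁆⁆⁆⁆
        = ⁅a, ⁅b, ⁅a, ⁅b, w⁆⁆⁆⁆ + ⁅b, ⁅b, ⁅a, ⁅b, w⁆⁆⁆⁆ := by
      rw [hS, hap]; simp
    have hSq : ⁅a + b, ⁅a + b, ⁅b, ⁅b, w⁆⁆⁆⁆
        = ⁅a, ⁅a, ⁅b, ⁅b, w⁆⁆⁆⁆ + ⁅b, ⁅a, ⁅b, ⁅b, w⁆⁆⁆⁆ := by
      rw [hS, hbq]; simp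
    have hTp : ⁅K, ⁅K, ⁅a, ⁅b, w⁆⁆⁆⁆
        = ⁅a, ⁅b, ⁅a, ⁅b, w⁆⁆⁆⁆ - ⁅b, ⁅b, ⁅a, ⁅b, w⁆⁆⁆⁆ := by
      rw [hT, hap]; simp
    have hTq : ⁅K, ⁅K, ⁅b, ⁅b, w⁆⁆⁆⁆
        = ⁅b, ⁅a, ⁅b, ⁅b, w⁆⁆⁆⁆ - ⁅a, ⁅a, ⁅b, ⁅b, w⁆⁆⁆⁆ := by
      rw [hT, hbq]; simp
    rw [hTw, lie_sub, lie_sub, hSp, hSq, hSw, lie_add, lie_add, hTp, hTq, hcore]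
    abel
  -- the quadratic operators commute on mn
  have case_n : ∀ w ∈ mn,
      ⁅a + b, ⁅a + b, ⁅K, ⁅K, w⁆⁆⁆⁆ = ⁅K, ⁅K, ⁅a + b, ⁅a + b, w⁆⁆⁆⁆ := by
    intro w hw
    have hbw : ⁅b, w⁆ = 0 := hnn b hb w hw
    have hu_k : ⁅a, w⁆ ∈ k := hpn a ha w hw
    have hq_mp : ⁅a, ⁅a, w⁆⁆ ∈ mp := by
      rw [← lie_skew a ⁅a, w⁆]
      exact Submodule.neg_mem _ (hkp _ hu_k a ha)
    have hp_mn : ⁅b, ⁅a, w⁆⁆ ∈ mn := by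
      rw [← lie_skew b ⁅a, w⁆]
      exact Submodule.neg_mem _ (hkn _ hu_k b hb)
    have haq : ⁅a, ⁅a, ⁅a, w⁆⁆⁆ = 0 := hpp a ha _ hq_mp
    have hbp : ⁅b, ⁅b, ⁅a, w⁆⁆⁆ = 0 := hnn b hb _ hp_mn
    have hr3 : ⁅⁅a, ⁅b, a⁆⁆, a⁆ = 0 := by
      have hc : ⁅b, a⁆ ∈ k := by
        rw [← lie_skew b a]; exact Submodule.neg_mem _ (hpn a ha b hb)
      have hr : ⁅a, ⁅b, a⁆⁆ ∈ mp := by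
        rw [← lie_skew a ⁅b, a⁆]
        exact Submodule.neg_mem _ (hkp _ hc a ha)
      exact hpp _ hr a ha
    have hcore := core3 hbw haq hr3
    have hSw : ⁅a + b, ⁅a + b, w⁆⁆ = ⁅a, ⁅a, w⁆⁆ + ⁅b, ⁅a, w⁆⁆ := by
      rw [hS w, hbw]; simp
    have hTw : ⁅K, ⁅K, w⁆⁆ = ⁅b, ⁅a, w⁆⁆ - ⁅a, ⁅a, w⁆⁆ := by
      rw [hT w, hbw]; simp
    have hSq : ⁅a + b, ⁅a + b, ⁅a, ⁅a, w⁆⁆⁆⁆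
        = ⁅a, ⁅b, ⁅a, ⁅a, w⁆⁆⁆⁆ + ⁅b, ⁅b, ⁅a, ⁅a, w⁆⁆⁆⁆ := by
      rw [hS, haq]; simp
    have hSp : ⁅a + b, ⁅a + b, ⁅b, ⁅a, w⁆⁆⁆⁆
        = ⁅a, ⁅a, ⁅b, ⁅a, w⁆⁆⁆⁆ + ⁅b, ⁅a, ⁅b, ⁅a, w⁆⁆⁆⁆ := by
      rw [hS, hbp]; simp
    have hTq : ⁅K, ⁅K, ⁅a, ⁅a, w⁆⁆⁆⁆
        = ⁅a, ⁅b, ⁅a, ⁅a, w⁆⁆⁆⁆ - ⁅b, ⁅b, ⁅a, ⁅a, w⁆⁆⁆⁆ := by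
      rw [hT, haq]; simp
    have hTp : ⁅K, ⁅K, ⁅b, ⁅a, w⁆⁆⁆⁆
        = ⁅b, ⁅a, ⁅b, ⁅a, w⁆⁆⁆⁆ - ⁅a, ⁅a, ⁅b, ⁅a, w⁆⁆⁆⁆ := by
      rw [hT, hbp]; simp
    rw [hTw, lie_sub, lie_sub, hSp, hSq, hSw, lie_add, lie_add, hTp, hTq, hcore]
    abel
  -- commutation of the quadratic operators on all of m
  have comm1 : ∀ V ∈ mp ⊔ mn,
      ⁅a + b, ⁅a + b, ⁅K, ⁅K, V⁆⁆⁆⁆ = ⁅K, ⁅K, ⁅a + b, ⁅a + b, V⁆⁆⁆⁆ := by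
    intro V hV
    obtain ⟨v1, hv1, v2, hv2, rfl⟩ := Submodule.mem_sup.mp hV
    simp only [lie_add]
    rw [case_p v1 hv1, case_n v2 hv2]
  -- pass to endomorphism language
  have adsq : ∀ (x V : L), ((LieAlgebra.ad ℂ L x) ^ 2) V = ⁅x, ⁅x, V⁆⁆ := by
    intro x V
    rw [pow_two, Module.End.mul_apply, LieAlgebra.ad_apply, LieAlgebra.ad_apply]
  intro W hW
  rw [hJZ, pow_mul, pow_mul]
  have := pow_comm_on (mp ⊔ mn)
      ((LieAlgebra.ad ℂ L K) ^ 2) ((LieAlgebra.ad ℂ L (a + b)) ^ 2)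
      (by intro x hx; rw [adsq]; exact memS K hKm x hx)
      (by intro x hx; rw [adsq]; exact memS (a + b) hZm x hx)
      (by intro x hx
          rw [adsq, adsq, adsq, adsq]
          exact (comm1 x hx).symm)
      j l W hW
  exact this
end

section
/- For every Z ∈ m, exp(ad_Z)(Υ) = (Υ - F_Z(JZ)) - E_Z(JZ), where Υ - F_Z(JZ) lies in k and E_Z(JZ) lies in m; moreover Υ - F_Z(JZ) = ½(exp(ad_Z) + exp(ad_{-Z}))(Υ) and -E_Z(JZ) = ½(exp(ad_Z) - exp(ad_{-Z}))(Υ). In other words, the k-component of exp(ad_Z)(Υ) is Υ - F_Z(JZ) and its m-component is -E_Z(JZ). -/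
noncomputable section

variable {L : Type*} [NormedAddCommGroup L] [NormedSpace ℂ L] [FiniteDimensional ℂ L]

/-- The adjoint operator ad_Z = ⁅Z, ·⁆, as a continuous ℂ-linear endomorphism of L, where the
Lie bracket of L is given by the ℂ-bilinear map bra. -/
def adC (bra : L →ₗ[ℂ] L →ₗ[ℂ] L) (Z : L) : L →L[ℂ] L :=
  LinearMap.toContinuousLinearMap (bra Z)

/-- exp T = Σ_{n ≥ 0} Tⁿ/n!, the exponential in the Banach algebra of continuous ℂ-linear
endomorphisms of L. -/
def expOp (T : L →L[ℂ] L) : L →L[ℂ] L :=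
  ∑' n : ℕ, ((n.factorial : ℂ)⁻¹) • T ^ n

/-- E_Z = Σ_{n ≥ 0} ad_Z^{2n}/(2n+1)!. -/
def Eop (bra : L →ₗ[ℂ] L →ₗ[ℂ] L) (Z : L) : L →L[ℂ] L :=
  ∑' n : ℕ, (((2 * n + 1).factorial : ℂ)⁻¹) • adC bra Z ^ (2 * n)

/-- F_Z = Σ_{n ≥ 1} ad_Z^{2n-1}/(2n)!. -/
def Fop (bra : L →ₗ[ℂ] L →ₗ[ℂ] L) (Z : L) : L →L[ℂ] L :=
  ∑' n : ℕ, (((2 * n + 2).factorial : ℂ)⁻¹) • adC bra Z ^ (2 * n + 1)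

/-- S_Z = Σ_{n ≥ 0} ad_Z^{2n}/(2n)!. -/
def Sop (bra : L →ₗ[ℂ] L →ₗ[ℂ] L) (Z : L) : L →L[ℂ] L :=
  ∑' n : ℕ, (((2 * n).factorial : ℂ)⁻¹) • adC bra Z ^ (2 * n)

lemma summable_aux (T : L →L[ℂ] L) {g : ℕ → ℕ} (hg : Function.Injective g) (c : ℕ → ℕ)
    (hc : ∀ n, (g n).factorial ≤ c n) :
    Summable fun n => ((c n : ℂ))⁻¹ • T ^ (g n) := by
  have base : Summable fun n : ℕ => ‖T‖ ^ n / (n.factorial : ℝ) :=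
    Real.summable_pow_div_factorial _
  refine Summable.of_norm_bounded (base.comp_injective hg) ?_
  intro n
  have h0 : ‖((c n : ℂ))⁻¹ • T ^ (g n)‖ ≤ ((c n : ℝ))⁻¹ * ‖T ^ (g n)‖ := by
    have := norm_smul_le ((c n : ℂ))⁻¹ (T ^ (g n))
    simpa using this
  refine h0.trans ?_
  have hTn : ‖T ^ (g n)‖ ≤ ‖T‖ ^ (g n) := by
    rcases Nat.eq_zero_or_pos (g n) with h | h
    · simp only [h, pow_zero]; exact ContinuousLinearMap.norm_id_le (𝕜 := ℂ) (E := L)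
    · exact norm_pow_le' T h
  have hfac : ((c n : ℝ))⁻¹ ≤ (((g n).factorial : ℝ))⁻¹ := by
    apply inv_anti₀
    · exact_mod_cast Nat.factorial_pos _
    · exact_mod_cast hc n
  calc ((c n : ℝ))⁻¹ * ‖T ^ (g n)‖
      ≤ (((g n).factorial : ℝ))⁻¹ * ‖T‖ ^ (g n) := by
        apply mul_le_mul hfac hTn (norm_nonneg _)
        positivity
    _ = ((fun m : ℕ => ‖T‖ ^ m / (m.factorial : ℝ)) ∘ g) n := by
        simp [div_eq_mul_inv, mul_comm]

lemma tsum_clm_apply {f : ℕ → L →L[ℂ] L} (hf : Summable f) (v : L) :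
    (∑' n, f n) v = ∑' n, f n v :=
  (ContinuousLinearMap.apply ℂ L v).map_tsum hf

lemma summable_apply {f : ℕ → L →L[ℂ] L} (hf : Summable f) (v : L) :
    Summable fun n => f n v :=
  hf.map (ContinuousLinearMap.apply ℂ L v) (ContinuousLinearMap.apply ℂ L v).continuous

lemma tsum_mem_closed {f : ℕ → L} (p : Submodule ℂ L) (h : ∀ n, f n ∈ p) :
    (∑' n, f n) ∈ p := by
  by_cases hf : Summable f
  · have hcl : IsClosed (p : Set L) := p.closed_of_finiteDimensional
    exact hcl.mem_of_tendsto hf.hasSum.tendsto_sum_nat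
      (Filter.Eventually.of_forall fun n => sum_mem fun i _ => h i)
  · rw [tsum_eq_zero_of_not_summable hf]; exact zero_mem p

lemma summable_exp_aux (T : L →L[ℂ] L) :
    Summable fun n : ℕ => ((n.factorial : ℂ))⁻¹ • T ^ n :=
  summable_aux T (g := id) Function.injective_id (fun n => n.factorial) (fun _ => le_rfl)

lemma summable_E_aux (T : L →L[ℂ] L) :
    Summable fun n : ℕ => (((2 * n + 1).factorial : ℂ))⁻¹ • T ^ (2 * n) :=
  summable_aux T (g := fun n => 2 * n) (fun a b h => by simpa using h)
    (fun n => (2 * n + 1).factorial) (fun n => Nat.factorial_le (by show 2 * n ≤ 2 * n + 1; omega))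

lemma summable_F_aux (T : L →L[ℂ] L) :
    Summable fun n : ℕ => (((2 * n + 2).factorial : ℂ))⁻¹ • T ^ (2 * n + 1) :=
  summable_aux T (g := fun n => 2 * n + 1) (fun a b h => by simpa using h)
    (fun n => (2 * n + 2).factorial) (fun n => Nat.factorial_le (by show 2 * n + 1 ≤ 2 * n + 2; omega))

lemma summable_shift_aux (T : L →L[ℂ] L) :
    Summable fun n : ℕ => (((n + 1).factorial : ℂ))⁻¹ • T ^ n :=
  summable_aux T (g := id) Function.injective_id (fun n => (n + 1).factorial)
    (fun n => Nat.factorial_le (Nat.le_succ n))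

lemma exp_decomp (T : L →L[ℂ] L) (u w : L) (h : T u = w) :
    expOp T u = u + ((∑' n, (((2 * n + 1).factorial : ℂ))⁻¹ • (T ^ (2 * n)) w)
      + ∑' n, (((2 * n + 2).factorial : ℂ))⁻¹ • (T ^ (2 * n + 1)) w) := by
  have hv : Summable fun n : ℕ => ((n.factorial : ℂ))⁻¹ • (T ^ n) u := by
    simpa [ContinuousLinearMap.smul_apply, Function.comp]
      using summable_apply (summable_exp_aux T) u
  have e1 : expOp T u = ∑' n : ℕ, ((n.factorial : ℂ))⁻¹ • (T ^ n) u := by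
    rw [expOp, tsum_clm_apply (summable_exp_aux T)]
    simp [ContinuousLinearMap.smul_apply]
  rw [e1, Summable.tsum_eq_zero_add hv]
  congr 1
  · simp
  have ht : ∀ n : ℕ, ((((n + 1) : ℕ).factorial : ℂ))⁻¹ • (T ^ (n + 1)) u
      = ((((n + 1) : ℕ).factorial : ℂ))⁻¹ • (T ^ n) w := by
    intro n
    rw [pow_succ, ContinuousLinearMap.mul_apply, h]
  rw [tsum_congr ht]
  have hw : Summable fun n : ℕ => ((((n + 1) : ℕ).factorial : ℂ))⁻¹ • (T ^ n) w := by
    simpa [ContinuousLinearMap.smul_apply, Function.comp]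
      using summable_apply (summable_shift_aux T) w
  have hwe : Summable fun n : ℕ =>
      ((((2 * n + 1) : ℕ).factorial : ℂ))⁻¹ • (T ^ (2 * n)) w := by
    have := hw.comp_injective (i := fun n : ℕ => 2 * n) (fun a b h => by simpa using h)
    simpa [Function.comp_def] using this
  have hwo : Summable fun n : ℕ =>
      ((((2 * n + 2) : ℕ).factorial : ℂ))⁻¹ • (T ^ (2 * n + 1)) w := by
    have := hw.comp_injective (i := fun n : ℕ => 2 * n + 1) (fun a b h => by simpa using h)
    simpa [Function.comp_def] using this
  rw [← tsum_even_add_odd (f := fun n : ℕ => ((((n + 1) : ℕ).factorial : ℂ))⁻¹ • (T ^ n) w)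
      (by simpa using hwe) (by simpa using hwo)]

/-- exp(ad_Z)(Υ) = (Υ - F_Z(JZ)) - E_Z(JZ), where Υ - F_Z(JZ) ∈ k and E_Z(JZ) ∈ m; moreover Υ - F_Z(JZ) = ½(exp(ad_Z)+exp(ad_{-Z}))(Υ) and -E_Z(JZ) = ½(exp(ad_Z)-exp(ad_{-Z}))(Υ). -/
theorem statement4 {L : Type*} [NormedAddCommGroup L] [NormedSpace ℂ L] [FiniteDimensional ℂ L]
    (bra : L →ₗ[ℂ] L →ₗ[ℂ] L)
    (halt : ∀ x : L, bra x x = 0)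
    (hjac : ∀ x y z : L, bra x (bra y z) = bra (bra x y) z + bra y (bra x z))
    (k mp mn : Submodule ℂ L)
    (hsup : k ⊔ (mp ⊔ mn) = ⊤)
    (hd1 : Disjoint k (mp ⊔ mn))
    (hd2 : Disjoint mp mn)
    (hkk : ∀ x ∈ k, ∀ y ∈ k, bra x y ∈ k)
    (hkp : ∀ x ∈ k, ∀ y ∈ mp, bra x y ∈ mp)
    (hkn : ∀ x ∈ k, ∀ y ∈ mn, bra x y ∈ mn)
    (hpp : ∀ x ∈ mp, ∀ y ∈ mp, bra x y = 0)
    (hnn : ∀ x ∈ mn, ∀ y ∈ mn, bra x y = 0)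
    (hpn : ∀ x ∈ mp, ∀ y ∈ mn, bra x y ∈ k)
    (J : L →ₗ[ℂ] L)
    (hJp : ∀ x ∈ mp, J x = Complex.I • x)
    (hJn : ∀ x ∈ mn, J x = -(Complex.I • x))
    (Υ : L)
    (hUk : ∀ X ∈ k, bra Υ X = 0)
    (hUm : ∀ W ∈ mp ⊔ mn, bra Υ W = J W)
    (Z : L) (hZ : Z ∈ mp ⊔ mn) :
    expOp (adC bra Z) Υ = (Υ - Fop bra Z (J Z)) - Eop bra Z (J Z) ∧
    Υ - Fop bra Z (J Z) ∈ k ∧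
    Eop bra Z (J Z) ∈ mp ⊔ mn ∧
    Υ - Fop bra Z (J Z) = (2 : ℂ)⁻¹ • (expOp (adC bra Z) Υ + expOp (adC bra (-Z)) Υ) ∧
    -(Eop bra Z (J Z)) = (2 : ℂ)⁻¹ • (expOp (adC bra Z) Υ - expOp (adC bra (-Z)) Υ) := by
  -- antisymmetry
  have hanti : ∀ x y : L, bra x y = -bra y x := by
    intro x y
    have h := halt (x + y)
    rw [map_add] at h
    simp only [LinearMap.add_apply, map_add, halt, zero_add, add_zero] at h
    exact eq_neg_of_add_eq_zero_right h
  -- bracket membership lemmas for m := mp ⊔ mn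
  have hbra_mm : ∀ x ∈ mp ⊔ mn, ∀ y ∈ mp ⊔ mn, bra x y ∈ k := by
    intro x hx y hy
    obtain ⟨a, ha, b, hb, rfl⟩ := Submodule.mem_sup.mp hx
    obtain ⟨c, hc, d, hd, rfl⟩ := Submodule.mem_sup.mp hy
    have h1 : bra a c = 0 := hpp a ha c hc
    have h2 : bra b d = 0 := hnn b hb d hd
    have h3 : bra a d ∈ k := hpn a ha d hd
    have h4 : bra b c ∈ k := by
      rw [hanti b c]; exact neg_mem (hpn c hc b hb)
    simp only [map_add, LinearMap.add_apply, h1, h2, zero_add, add_zero]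
    exact add_mem h4 h3
  have hbra_km : ∀ x ∈ k, ∀ y ∈ mp ⊔ mn, bra x y ∈ mp ⊔ mn := by
    intro x hx y hy
    obtain ⟨c, hc, d, hd, rfl⟩ := Submodule.mem_sup.mp hy
    rw [map_add]
    exact add_mem (Submodule.mem_sup_left (hkp x hx c hc))
      (Submodule.mem_sup_right (hkn x hx d hd))
  have hbra_mk : ∀ x ∈ mp ⊔ mn, ∀ y ∈ k, bra x y ∈ mp ⊔ mn := by
    intro x hx y hy
    rw [hanti x y]; exact neg_mem (hbra_km y hy x hx)
  have hJm : ∀ x ∈ mp ⊔ mn, J x ∈ mp ⊔ mn := by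
    intro x hx
    obtain ⟨a, ha, b, hb, rfl⟩ := Submodule.mem_sup.mp hx
    rw [map_add, hJp a ha, hJn b hb]
    exact add_mem (Submodule.mem_sup_left (Submodule.smul_mem _ _ ha))
      (Submodule.mem_sup_right (neg_mem (Submodule.smul_mem _ _ hb)))
  have hJzero : ∀ x ∈ mp ⊔ mn, J x = 0 → x = 0 := by
    intro x hx hJx
    obtain ⟨a, ha, b, hb, rfl⟩ := Submodule.mem_sup.mp hx
    rw [map_add, hJp a ha, hJn b hb] at hJx
    have h1 : Complex.I • a = Complex.I • b := by
      rwa [add_neg_eq_zero] at hJx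
    have h2 : Complex.I • a ∈ mp ⊓ mn :=
      ⟨Submodule.smul_mem _ _ ha, h1 ▸ Submodule.smul_mem _ _ hb⟩
    have h3 : Complex.I • a = 0 := (Submodule.mem_bot ℂ).mp (hd2.le_bot h2)
    have h4 : a = 0 := by
      rcases smul_eq_zero.mp h3 with h | h
      · exact absurd h Complex.I_ne_zero
      · exact h
    have h5 : Complex.I • b = 0 := by rw [← h1, h3]
    have h6 : b = 0 := by
      rcases smul_eq_zero.mp h5 with h | h
      · exact absurd h Complex.I_ne_zero
      · exact h
    rw [h4, h6, add_zero]
  -- Υ ∈ k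
  have hUmem : Υ ∈ k ⊔ (mp ⊔ mn) := by rw [hsup]; trivial
  obtain ⟨u, hu, v, hv, huv⟩ := Submodule.mem_sup.mp hUmem
  have hvm : ∀ W ∈ mp ⊔ mn, bra v W = 0 := by
    intro W hW
    have h1 : bra Υ W = J W := hUm W hW
    have h2 : bra u W + bra v W = J W := by
      rw [← h1, ← huv, map_add, LinearMap.add_apply]
    have h3 : bra v W ∈ mp ⊔ mn := by
      have heq : bra v W = J W - bra u W := by rw [← h2]; abel
      rw [heq]
      exact sub_mem (hJm W hW) (hbra_km u hu W hW)
    have h4 : bra v W ∈ k := hbra_mm v hv W hW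
    exact (Submodule.mem_bot ℂ).mp (hd1.le_bot ⟨h4, h3⟩)
  have hvk : ∀ X ∈ k, bra v X = 0 := by
    intro X hX
    have h1 : bra u X + bra v X = 0 := by
      rw [← LinearMap.add_apply, ← map_add, huv]
      exact hUk X hX
    have h2 : bra v X = -bra u X := eq_neg_of_add_eq_zero_right h1
    have h3 : bra v X ∈ k := by rw [h2]; exact neg_mem (hkk u hu X hX)
    have h4 : bra v X ∈ mp ⊔ mn := hbra_mk v hv X hX
    exact (Submodule.mem_bot ℂ).mp (hd1.le_bot ⟨h3, h4⟩)
  have h2 : bra v Υ = 0 := by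
    rw [← huv, map_add, hvk u hu, halt v, add_zero]
  have hJv : J v = 0 := by
    calc J v = bra Υ v := (hUm v hv).symm
      _ = -bra v Υ := hanti Υ v
      _ = 0 := by rw [h2, neg_zero]
  have hv0 : v = 0 := hJzero v hv hJv
  have hUink : Υ ∈ k := by rw [← huv, hv0, add_zero]; exact hu
  -- adjoint operator basics
  set T := adC bra Z with hT
  have hTapp : ∀ x : L, T x = bra Z x := fun x => rfl
  have hTm : ∀ w ∈ mp ⊔ mn, T w ∈ k := fun w hw => hbra_mm Z hZ w hw
  have hTk : ∀ x ∈ k, T x ∈ mp ⊔ mn := fun x hx => hbra_mk Z hZ x hx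
  have heven : ∀ n : ℕ, ∀ w ∈ mp ⊔ mn, (T ^ (2 * n)) w ∈ mp ⊔ mn := by
    intro n
    induction n with
    | zero => intro w hw; simpa using hw
    | succ n ih =>
      intro w hw
      have h2n : 2 * (n + 1) = (2 * n + 1) + 1 := by ring
      rw [h2n, pow_succ, pow_succ, ContinuousLinearMap.mul_apply,
        ContinuousLinearMap.mul_apply]
      exact ih _ (hTk _ (hTm w hw))
  have hodd : ∀ n : ℕ, ∀ w ∈ mp ⊔ mn, (T ^ (2 * n + 1)) w ∈ k := by
    intro n w hw
    rw [pow_succ', ContinuousLinearMap.mul_apply]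
    exact hTm _ (heven n w hw)
  have hJZm : J Z ∈ mp ⊔ mn := hJm Z hZ
  have hTΥ : T Υ = -(J Z) := by
    rw [hTapp, hanti Z Υ, hUm Z hZ]
  have hEapp : Eop bra Z (J Z)
      = ∑' n, (((2 * n + 1).factorial : ℂ))⁻¹ • (T ^ (2 * n)) (J Z) := by
    rw [Eop, tsum_clm_apply (summable_E_aux T)]
    simp only [ContinuousLinearMap.smul_apply]
  have hFapp : Fop bra Z (J Z)
      = ∑' n, (((2 * n + 2).factorial : ℂ))⁻¹ • (T ^ (2 * n + 1)) (J Z) := by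
    rw [Fop, tsum_clm_apply (summable_F_aux T)]
    simp only [ContinuousLinearMap.smul_apply]
  have key1 : expOp T Υ = Υ + (-(Eop bra Z (J Z)) + -(Fop bra Z (J Z))) := by
    rw [exp_decomp T Υ (-(J Z)) hTΥ]
    congr 1
    congr 1
    · rw [hEapp, ← tsum_neg]
      exact tsum_congr fun n => by rw [map_neg, smul_neg]
    · rw [hFapp, ← tsum_neg]
      exact tsum_congr fun n => by rw [map_neg, smul_neg]
  have hnegT : adC bra (-Z) = -T := by
    ext x
    show bra (-Z) x = -(bra Z x)
    rw [map_neg, LinearMap.neg_apply]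
  have hnegTΥ : (-T) Υ = J Z := by
    rw [ContinuousLinearMap.neg_apply, hTΥ, neg_neg]
  have key2 : expOp (adC bra (-Z)) Υ = Υ + (Eop bra Z (J Z) + -(Fop bra Z (J Z))) := by
    rw [hnegT, exp_decomp (-T) Υ (J Z) hnegTΥ]
    congr 1
    congr 1
    · rw [hEapp]
      exact tsum_congr fun n => by rw [Even.neg_pow ⟨n, by ring⟩]
    · rw [hFapp, ← tsum_neg]
      exact tsum_congr fun n => by
        rw [Odd.neg_pow ⟨n, rfl⟩, ContinuousLinearMap.neg_apply, smul_neg]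
  have hFk : Fop bra Z (J Z) ∈ k := by
    rw [hFapp]
    exact tsum_mem_closed k fun n => Submodule.smul_mem _ _ (hodd n _ hJZm)
  have hEm : Eop bra Z (J Z) ∈ mp ⊔ mn := by
    rw [hEapp]
    exact tsum_mem_closed _ fun n => Submodule.smul_mem _ _ (heven n _ hJZm)
  refine ⟨by rw [key1]; abel, sub_mem hUink hFk, hEm, ?_, ?_⟩
  · rw [key1, key2]; module
  · rw [key1, key2]; module
end
end

section
/- For every Z ∈ m and every A ∈ m, the element (exp(ad_Z) - exp(ad_{-Z}))(A) lies in k; consequently ⁅Υ, (exp(ad_Z) - exp(ad_{-Z}))(A)⁆ = 0. -/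
noncomputable section

variable {L : Type*} [NormedAddCommGroup L] [NormedSpace ℂ L] [FiniteDimensional ℂ L]

/-- Applying expOp to a vector gives the termwise sum. -/
theorem expOp_apply {L : Type*} [NormedAddCommGroup L] [NormedSpace ℂ L] [FiniteDimensional ℂ L]
    (T : L →L[ℂ] L) (A : L) :
    expOp T A = ∑' n : ℕ, ((n.factorial : ℂ)⁻¹) • (T ^ n) A := by
  have hs : Summable fun n : ℕ => ((n.factorial : ℂ)⁻¹) • T ^ n :=
    NormedSpace.expSeries_summable' T
  have := (ContinuousLinearMap.apply ℂ L A).map_tsum hs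
  simpa [expOp] using this

/-- For Z, A ∈ m, (exp(ad_Z) - exp(ad_{-Z}))(A) lies in k; consequently ⁅Υ, (exp(ad_Z) - exp(ad_{-Z}))(A)⁆ = 0. -/
theorem statement7 {L : Type*} [NormedAddCommGroup L] [NormedSpace ℂ L] [FiniteDimensional ℂ L]
    (bra : L →ₗ[ℂ] L →ₗ[ℂ] L)
    (halt : ∀ x : L, bra x x = 0)
    (hjac : ∀ x y z : L, bra x (bra y z) = bra (bra x y) z + bra y (bra x z))
    (k mp mn : Submodule ℂ L)
    (hsup : k ⊔ (mp ⊔ mn) = ⊤)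
    (hd1 : Disjoint k (mp ⊔ mn))
    (hd2 : Disjoint mp mn)
    (hkk : ∀ x ∈ k, ∀ y ∈ k, bra x y ∈ k)
    (hkp : ∀ x ∈ k, ∀ y ∈ mp, bra x y ∈ mp)
    (hkn : ∀ x ∈ k, ∀ y ∈ mn, bra x y ∈ mn)
    (hpp : ∀ x ∈ mp, ∀ y ∈ mp, bra x y = 0)
    (hnn : ∀ x ∈ mn, ∀ y ∈ mn, bra x y = 0)
    (hpn : ∀ x ∈ mp, ∀ y ∈ mn, bra x y ∈ k)
    (J : L →ₗ[ℂ] L)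
    (hJp : ∀ x ∈ mp, J x = Complex.I • x)
    (hJn : ∀ x ∈ mn, J x = -(Complex.I • x))
    (Υ : L)
    (hUk : ∀ X ∈ k, bra Υ X = 0)
    (hUm : ∀ W ∈ mp ⊔ mn, bra Υ W = J W)
    (Z A : L) (hZ : Z ∈ mp ⊔ mn) (hA : A ∈ mp ⊔ mn) :
    expOp (adC bra Z) A - expOp (adC bra (-Z)) A ∈ k ∧
    bra Υ (expOp (adC bra Z) A - expOp (adC bra (-Z)) A) = 0 := by
  set m : Submodule ℂ L := mp ⊔ mn with hm
  -- antisymmetry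
  have hanti : ∀ x y : L, bra x y = - bra y x := by
    intro x y
    have h := halt (x + y)
    simp only [map_add, LinearMap.add_apply, halt, zero_add, add_zero] at h
    exact eq_neg_of_add_eq_zero_right h
  -- bracket of two m elements is in k
  have hmm : ∀ x ∈ m, ∀ y ∈ m, bra x y ∈ k := by
    intro x hx y hy
    obtain ⟨xp, hxp, xn, hxn, rfl⟩ := Submodule.mem_sup.mp hx
    obtain ⟨yp, hyp, yn, hyn, rfl⟩ := Submodule.mem_sup.mp hy
    simp only [map_add, LinearMap.add_apply]
    have h1 : bra xp yp = 0 := hpp _ hxp _ hyp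
    have h2 : bra xn yn = 0 := hnn _ hxn _ hyn
    have h3 : bra xp yn ∈ k := hpn _ hxp _ hyn
    have h4 : bra xn yp ∈ k := by
      rw [hanti]; exact k.neg_mem (hpn _ hyp _ hxn)
    rw [h1, h2]
    simpa [add_comm] using k.add_mem (k.add_mem (k.zero_mem) h4) (k.add_mem h3 k.zero_mem)
  -- bracket of an m element with a k element is in m
  have hmk : ∀ x ∈ m, ∀ y ∈ k, bra x y ∈ m := by
    intro x hx y hy
    obtain ⟨xp, hxp, xn, hxn, rfl⟩ := Submodule.mem_sup.mp hx
    rw [hanti]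
    refine m.neg_mem ?_
    simp only [map_add]
    exact m.add_mem (Submodule.mem_sup_left (hkp _ hy _ hxp))
      (Submodule.mem_sup_right (hkn _ hy _ hxn))
  set T := adC bra Z with hT
  have hTapp : ∀ x : L, T x = bra Z x := fun x => rfl
  have hTm : ∀ x ∈ m, T x ∈ k := fun x hx => hmm Z hZ x hx
  have hTk : ∀ x ∈ k, T x ∈ m := fun x hx => hmk Z hZ x hx
  -- even powers preserve m, odd powers land in k
  have heven : ∀ n : ℕ, (T ^ (2 * n)) A ∈ m := by
    intro n
    induction n with
    | zero => simp only [mul_zero, pow_zero, ContinuousLinearMap.one_apply]; exact hA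
    | succ n ih =>
      have h2 : 2 * (n + 1) = (2 * n + 1) + 1 := by ring
      rw [h2, pow_succ', pow_succ', ContinuousLinearMap.mul_apply,
        ContinuousLinearMap.mul_apply]
      exact hTk _ (hTm _ ih)
  have hodd : ∀ n : ℕ, (T ^ (2 * n + 1)) A ∈ k := by
    intro n
    rw [pow_succ', ContinuousLinearMap.mul_apply]
    exact hTm _ (heven n)
  have hallk : ∀ n : ℕ, (T ^ n) A - ((-T) ^ n) A ∈ k := by
    intro n
    rcases Nat.even_or_odd n with ⟨c, hc⟩ | ⟨c, hc⟩
    · rw [Even.neg_pow ⟨c, hc⟩]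
      simpa using k.zero_mem
    · rw [Odd.neg_pow ⟨c, hc⟩]
      have : (T ^ n) A - (-(T ^ n)) A = (2 : ℂ) • (T ^ n) A := by
        simp [two_smul]
      rw [this, hc]
      exact k.smul_mem _ (hodd c)
  -- adC bra (-Z) = -T
  have hneg : adC bra (-Z) = -T := by
    ext x
    simp [adC, hT]
  -- summability of the applied series
  have hs1 : Summable fun n : ℕ => ((n.factorial : ℂ)⁻¹) • (T ^ n) A :=
    ((NormedSpace.expSeries_summable' (𝕂 := ℂ) T).map
      (ContinuousLinearMap.apply ℂ L A) (ContinuousLinearMap.apply ℂ L A).continuous)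
  have hs2 : Summable fun n : ℕ => ((n.factorial : ℂ)⁻¹) • ((-T) ^ n) A :=
    ((NormedSpace.expSeries_summable' (𝕂 := ℂ) (-T)).map
      (ContinuousLinearMap.apply ℂ L A) (ContinuousLinearMap.apply ℂ L A).continuous)
  have key : expOp (adC bra Z) A - expOp (adC bra (-Z)) A
      = ∑' n : ℕ, (((n.factorial : ℂ)⁻¹) • (T ^ n) A - ((n.factorial : ℂ)⁻¹) • ((-T) ^ n) A) := by
    rw [hneg, expOp_apply, expOp_apply, ← Summable.tsum_sub hs1 hs2]
  have hmem : expOp (adC bra Z) A - expOp (adC bra (-Z)) A ∈ k := by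
    rw [key]
    have hclosed : IsClosed (k : Set L) := Submodule.closed_of_finiteDimensional k
    have hsum : Summable fun n : ℕ =>
        (((n.factorial : ℂ)⁻¹) • (T ^ n) A - ((n.factorial : ℂ)⁻¹) • ((-T) ^ n) A) :=
      hs1.sub hs2
    refine hclosed.mem_of_tendsto hsum.hasSum ?_
    filter_upwards with s
    refine Submodule.sum_mem k fun n _ => ?_
    rw [← smul_sub]
    exact k.smul_mem _ (hallk n)
  exact ⟨hmem, hUk _ hmem⟩
end
end

section
/- For every Z ∈ m and every A ∈ m, S_Z(J(S_Z(A))) = ½ ⁅(exp(ad_Z) + exp(ad_{-Z}))(Υ), A⁆. -/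
set_option linter.unusedSectionVars false


noncomputable section

variable {L : Type*} [NormedAddCommGroup L] [NormedSpace ℂ L] [FiniteDimensional ℂ L]

set_option maxHeartbeats 1000000

lemma adC_apply (bra : L →ₗ[ℂ] L →ₗ[ℂ] L) (Z x : L) : adC bra Z x = bra Z x := rfl

lemma sum_even_aux {M : Type*} [AddCommMonoid M] (f : ℕ → M) (hf : ∀ k, Odd k → f k = 0) (n : ℕ) :
    ∑ k ∈ Finset.range (2*n+1), f k = ∑ j ∈ Finset.range (n+1), f (2*j) := by
  induction n with
  | zero => simp
  | succ n ih =>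
    have h1 : 2*(n+1)+1 = (2*n+1) + 1 + 1 := by ring
    rw [h1, Finset.sum_range_succ, Finset.sum_range_succ, ih, hf (2*n+1) ⟨n, by ring⟩, add_zero,
      Finset.sum_range_succ]
    conv_rhs => rw [Finset.sum_range_succ]
    have h2 : 2*(n+1) = 2*n+2 := by ring
    rw [h2, Finset.sum_range_succ]

lemma bra_pow_left (bra : L →ₗ[ℂ] L →ₗ[ℂ] L)
    (hjac : ∀ x y z : L, bra x (bra y z) = bra (bra x y) z + bra y (bra x z))
    (Z : L) (n : ℕ) (x y : L) :
    bra ((adC bra Z ^ n) x) y = ∑ k ∈ Finset.range (n+1),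
      ((-1:ℂ)^k * (n.choose k : ℂ)) • ((adC bra Z ^ (n-k)) (bra x ((adC bra Z ^ k) y))) := by
  have key : ∀ u v : L, bra (adC bra Z u) v = adC bra Z (bra u v) - bra u (adC bra Z v) := by
    intro u v
    simp only [adC_apply]
    rw [hjac Z u v]; abel
  set D := adC bra Z with hD
  induction n generalizing y with
  | zero => simp
  | succ n ih =>
    have h1 : (D ^ (n+1)) x = D ((D^n) x) := by rw [pow_succ']; rfl
    rw [h1, key, ih y, ih (D y), map_sum]
    have hS1 : ∀ k, D (((-1:ℂ)^k * (n.choose k : ℂ)) • ((D ^ (n-k)) (bra x ((D ^ k) y))))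
        = ((-1:ℂ)^k * (n.choose k : ℂ)) • ((D ^ (n-k+1)) (bra x ((D ^ k) y))) := by
      intro k
      rw [map_smul]
      congr 1
      rw [pow_succ']
      rfl
    simp only [hS1]
    have hS2 : ∀ k : ℕ, (D ^ k) (D y) = (D ^ (k+1)) y := by
      intro k; rw [pow_succ]; rfl
    simp only [hS2]
    rw [Finset.sum_range_succ'
      (fun k => ((-1:ℂ)^k * ((n+1).choose k : ℂ)) • ((D ^ (n+1-k)) (bra x ((D ^ k) y))))]
    rw [Finset.sum_range_succ'
      (fun k => ((-1:ℂ)^k * (n.choose k : ℂ)) • ((D ^ (n-k+1)) (bra x ((D ^ k) y))))]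
    have hext : ∑ k ∈ Finset.range n,
        ((-1:ℂ)^(k+1) * (n.choose (k+1) : ℂ)) • ((D ^ (n-(k+1)+1)) (bra x ((D ^ (k+1)) y)))
        = ∑ k ∈ Finset.range (n+1),
        ((-1:ℂ)^(k+1) * (n.choose (k+1) : ℂ)) • ((D ^ (n-(k+1)+1)) (bra x ((D ^ (k+1)) y))) := by
      rw [Finset.sum_range_succ, Nat.choose_succ_self]
      simp
    rw [hext]
    rw [add_sub_right_comm, ← Finset.sum_sub_distrib]
    congr 1
    · apply Finset.sum_congr rfl
      intro k hk
      have hkle : k ≤ n := by simpa [Nat.lt_succ_iff] using hk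
      rcases eq_or_lt_of_le hkle with heq | hlt
      · subst heq
        have e1 : k - (k+1) + 1 = 1 := by omega
        have e2 : k - k = 0 := by omega
        have e3 : k + 1 - (k+1) = 0 := by omega
        rw [e1, e2, e3, Nat.choose_succ_self, Nat.choose_self, Nat.choose_self]
        push_cast
        rw [mul_zero, zero_smul, zero_sub, ← neg_smul]
        congr 1
        ring
      · have e1 : n - (k+1) + 1 = n - k := by omega
        have e2 : n + 1 - (k+1) = n - k := by omega
        rw [e1, e2, ← sub_smul]
        congr 1
        rw [Nat.choose_succ_succ]
        push_cast
        ring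
    · norm_num

lemma opnorm_pow_le (D : L →L[ℂ] L) (m : ℕ) : ‖D ^ m‖ ≤ ‖D‖ ^ m := by
  cases m with
  | zero => rw [pow_zero, pow_zero]; exact ContinuousLinearMap.norm_id_le
  | succ m => exact norm_pow_le' D (Nat.succ_pos m)

lemma summable_even_op (D : L →L[ℂ] L) :
    Summable (fun n : ℕ => (((2*n).factorial : ℂ)⁻¹) • D ^ (2*n)) := by
  apply Summable.of_norm_bounded (g := fun n : ℕ => ‖D‖^(2*n) / (2*n).factorial)
  · exact (Real.summable_pow_div_factorial ‖D‖).comp_injective (fun a b h => by omega)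
  · intro n
    rw [norm_smul ((((2*n).factorial : ℂ))⁻¹) (D ^ (2*n)), norm_inv, Complex.norm_natCast,
      div_eq_inv_mul]
    have h1 : (0:ℝ) ≤ (((2*n).factorial : ℝ))⁻¹ := by positivity
    exact mul_le_mul_of_nonneg_left (opnorm_pow_le D (2*n)) h1

lemma summable_exp_op (D : L →L[ℂ] L) :
    Summable (fun n : ℕ => ((n.factorial : ℂ)⁻¹) • D ^ n) :=
  NormedSpace.expSeries_summable' (𝕂 := ℂ) D

lemma summable_apply_s8 {T : ℕ → (L →L[ℂ] L)} (hT : Summable T) (x : L) :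
    Summable (fun n => T n x) := by
  have := hT.map (ContinuousLinearMap.apply ℂ L x).toLinearMap.toAddMonoidHom
    (ContinuousLinearMap.apply ℂ L x).continuous
  exact this

lemma tsum_apply_op {T : ℕ → (L →L[ℂ] L)} (hT : Summable T) (x : L) :
    (∑' n, T n) x = ∑' n, T n x := by
  simpa using (ContinuousLinearMap.apply ℂ L x).map_tsum hT

/-- For Z, A ∈ m, S_Z(J(S_Z(A))) = ½ ⁅(exp(ad_Z) + exp(ad_{-Z}))(Υ), A⁆. -/
theorem statement8 {L : Type*} [NormedAddCommGroup L] [NormedSpace ℂ L] [FiniteDimensional ℂ L]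
    (bra : L →ₗ[ℂ] L →ₗ[ℂ] L)
    (halt : ∀ x : L, bra x x = 0)
    (hjac : ∀ x y z : L, bra x (bra y z) = bra (bra x y) z + bra y (bra x z))
    (k mp mn : Submodule ℂ L)
    (hsup : k ⊔ (mp ⊔ mn) = ⊤)
    (hd1 : Disjoint k (mp ⊔ mn))
    (hd2 : Disjoint mp mn)
    (hkk : ∀ x ∈ k, ∀ y ∈ k, bra x y ∈ k)
    (hkp : ∀ x ∈ k, ∀ y ∈ mp, bra x y ∈ mp)
    (hkn : ∀ x ∈ k, ∀ y ∈ mn, bra x y ∈ mn)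
    (hpp : ∀ x ∈ mp, ∀ y ∈ mp, bra x y = 0)
    (hnn : ∀ x ∈ mn, ∀ y ∈ mn, bra x y = 0)
    (hpn : ∀ x ∈ mp, ∀ y ∈ mn, bra x y ∈ k)
    (J : L →ₗ[ℂ] L)
    (hJp : ∀ x ∈ mp, J x = Complex.I • x)
    (hJn : ∀ x ∈ mn, J x = -(Complex.I • x))
    (Υ : L)
    (hUk : ∀ X ∈ k, bra Υ X = 0)
    (hUm : ∀ W ∈ mp ⊔ mn, bra Υ W = J W)
    (Z A : L) (hZ : Z ∈ mp ⊔ mn) (hA : A ∈ mp ⊔ mn) :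
    Sop bra Z (J (Sop bra Z A)) =
      (2 : ℂ)⁻¹ • bra (expOp (adC bra Z) Υ + expOp (adC bra (-Z)) Υ) A := by
  set D := adC bra Z with hD
  set Jc := LinearMap.toContinuousLinearMap J with hJcdef
  have hJc : ∀ x : L, J x = Jc x := fun x => rfl
  set F : ℕ × ℕ → L := fun p =>
    ((((2*p.1).factorial : ℂ)⁻¹) * (((2*p.2).factorial : ℂ)⁻¹)) •
      ((D ^ (2*p.1)) (Jc ((D ^ (2*p.2)) A))) with hFdef
  -- skew symmetry
  have hskew : ∀ a b : L, bra a b = -bra b a := by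
    intro a b
    have h := halt (a+b)
    rw [map_add] at h
    simp only [LinearMap.add_apply, map_add, halt a, halt b] at h
    have h2 : bra a b + bra b a = 0 := by
      rw [← h]; abel
    exact eq_neg_of_add_eq_zero_left h2
  -- bracket closure
  have hmmk : ∀ x ∈ mp ⊔ mn, ∀ y ∈ mp ⊔ mn, bra x y ∈ k := by
    intro x hx y hy
    obtain ⟨xp, hxp, xn, hxn, rfl⟩ := Submodule.mem_sup.mp hx
    obtain ⟨yp, hyp, yn, hyn, rfl⟩ := Submodule.mem_sup.mp hy
    have e : bra (xp+xn) (yp+yn)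
        = bra xp yp + bra xp yn + (bra xn yp + bra xn yn) := by
      rw [map_add]
      simp only [LinearMap.add_apply, map_add]
      abel
    rw [e, hpp xp hxp yp hyp, hnn xn hxn yn hyn, zero_add, add_zero]
    refine k.add_mem (hpn xp hxp yn hyn) ?_
    rw [hskew xn yp]
    exact k.neg_mem (hpn yp hyp xn hxn)
  have hkmm : ∀ x ∈ k, ∀ y ∈ mp ⊔ mn, bra x y ∈ mp ⊔ mn := by
    intro x hx y hy
    obtain ⟨yp, hyp, yn, hyn, rfl⟩ := Submodule.mem_sup.mp hy
    rw [map_add]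
    exact Submodule.add_mem _ (Submodule.mem_sup_left (hkp x hx yp hyp))
      (Submodule.mem_sup_right (hkn x hx yn hyn))
  have hDm : ∀ y ∈ mp ⊔ mn, D y ∈ k := by
    intro y hy; rw [hD, adC_apply]; exact hmmk Z hZ y hy
  have hDk : ∀ y ∈ k, D y ∈ mp ⊔ mn := by
    intro y hy; rw [hD, adC_apply, hskew Z y]
    exact Submodule.neg_mem _ (hkmm y hy Z hZ)
  -- parity of powers
  have hpow : ∀ j : ℕ, ((D^(2*j)) A ∈ mp ⊔ mn) ∧ ((D^(2*j+1)) A ∈ k) := by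
    intro j
    induction j with
    | zero =>
      constructor
      · simpa using hA
      · have : (D^(2*0+1)) A = D A := by norm_num
        rw [this]; exact hDm A hA
    | succ j ih =>
      have e1 : (D^(2*(j+1))) A = D ((D^(2*j+1)) A) := by
        have : 2*(j+1) = (2*j+1)+1 := by ring
        rw [this, pow_succ']; rfl
      have m1 : (D^(2*(j+1))) A ∈ mp ⊔ mn := by rw [e1]; exact hDk _ ih.2
      refine ⟨m1, ?_⟩
      have e2 : (D^(2*(j+1)+1)) A = D ((D^(2*(j+1))) A) := by
        rw [pow_succ']; rfl
      rw [e2]; exact hDm _ m1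
  -- summability of operator series and friends
  have hop : Summable (fun n : ℕ => (((2*n).factorial : ℂ)⁻¹) • D ^ (2*n)) := summable_even_op D
  have hvecA : Summable (fun j : ℕ => (((2*j).factorial : ℂ)⁻¹) • (D^(2*j)) A) := by
    have := summable_apply_s8 hop A
    simpa using this
  have hvecU : Summable (fun j : ℕ => (((2*j).factorial : ℂ)⁻¹) • (D^(2*j)) Υ) := by
    have := summable_apply_s8 hop Υ
    simpa using this
  have hJA : Summable (fun j : ℕ => (((2*j).factorial : ℂ)⁻¹) • Jc ((D^(2*j)) A)) := by
    have := hvecA.map Jc.toLinearMap.toAddMonoidHom Jc.continuous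
    apply Summable.congr this
    intro j
    simp [Function.comp]
  have hF : Summable F := by
    apply Summable.of_norm_bounded (g := fun p : ℕ×ℕ =>
      (‖D‖^(2*p.1) / (2*p.1).factorial) * ((‖Jc‖*‖A‖+1) * (‖D‖^(2*p.2) / (2*p.2).factorial)))
    · exact Summable.mul_of_nonneg
        (f := fun m : ℕ => ‖D‖^(2*m) / (2*m).factorial)
        (g := fun m : ℕ => (‖Jc‖*‖A‖+1) * (‖D‖^(2*m) / (2*m).factorial))
        ((Real.summable_pow_div_factorial ‖D‖).comp_injective (fun a b h => by omega))
        (((Real.summable_pow_div_factorial ‖D‖).comp_injective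
          (fun a b h => by omega)).mul_left (‖Jc‖*‖A‖+1))
        (fun m => by positivity) (fun m => by positivity)
    · intro p
      rw [hFdef]
      rw [norm_smul (((((2*p.1).factorial : ℂ)⁻¹) * (((2*p.2).factorial : ℂ)⁻¹)))
        ((D ^ (2*p.1)) (Jc ((D ^ (2*p.2)) A)))]
      rw [norm_mul, norm_inv, norm_inv, Complex.norm_natCast, Complex.norm_natCast]
      have hb : ‖(D^(2*p.1)) (Jc ((D^(2*p.2)) A))‖
          ≤ ‖D‖^(2*p.1) * ((‖Jc‖*‖A‖+1) * ‖D‖^(2*p.2)) := by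
        calc ‖(D^(2*p.1)) (Jc ((D^(2*p.2)) A))‖
            ≤ ‖D^(2*p.1)‖ * ‖Jc ((D^(2*p.2)) A)‖ := ContinuousLinearMap.le_opNorm _ _
          _ ≤ ‖D^(2*p.1)‖ * (‖Jc‖ * ‖(D^(2*p.2)) A‖) := by
              gcongr <;> first
                | exact ContinuousLinearMap.le_opNorm _ _
                | exact opnorm_pow_le D _
                | positivity
          _ ≤ ‖D^(2*p.1)‖ * (‖Jc‖ * (‖D^(2*p.2)‖ * ‖A‖)) := by
              gcongr <;> first
                | exact ContinuousLinearMap.le_opNorm _ _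
                | exact opnorm_pow_le D _
                | positivity
          _ ≤ ‖D‖^(2*p.1) * (‖Jc‖ * (‖D‖^(2*p.2) * ‖A‖)) := by
              gcongr <;> first
                | exact ContinuousLinearMap.le_opNorm _ _
                | exact opnorm_pow_le D _
                | positivity
          _ ≤ ‖D‖^(2*p.1) * ((‖Jc‖*‖A‖+1) * ‖D‖^(2*p.2)) := by
              have h1 : ‖Jc‖ * (‖D‖^(2*p.2) * ‖A‖) = (‖Jc‖*‖A‖) * ‖D‖^(2*p.2) := by ring
              rw [h1]
              gcongr <;> first
                | positivity
                | linarith [norm_nonneg Jc, norm_nonneg A,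
                    mul_nonneg (norm_nonneg Jc) (norm_nonneg A)]
      calc (((2*p.1).factorial:ℝ))⁻¹ * (((2*p.2).factorial:ℝ))⁻¹
            * ‖(D^(2*p.1)) (Jc ((D^(2*p.2)) A))‖
          ≤ (((2*p.1).factorial:ℝ))⁻¹ * (((2*p.2).factorial:ℝ))⁻¹
            * (‖D‖^(2*p.1) * ((‖Jc‖*‖A‖+1) * ‖D‖^(2*p.2))) := by
            gcongr <;> positivity
        _ = ‖D‖^(2*p.1) / (2*p.1).factorial * ((‖Jc‖*‖A‖+1) * (‖D‖^(2*p.2) / (2*p.2).factorial)) := by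
            field_simp
            try ring
  -- the key bracket identity
  have hkey : ∀ n : ℕ, (((2*n).factorial : ℂ)⁻¹) • bra ((D^(2*n)) Υ) A
      = ∑ j ∈ Finset.range (n+1), F (n-j, j) := by
    intro n
    have hb := bra_pow_left bra hjac Z (2*n) Υ A
    rw [← hD] at hb
    rw [hb]
    rw [sum_even_aux (fun w => ((-1:ℂ)^w * (((2*n).choose w) : ℂ)) •
      ((D ^ (2*n-w)) (bra Υ ((D ^ w) A))))
      (by
        intro w hw
        obtain ⟨j, rfl⟩ := hw
        simp only [hUk _ ((hpow j).2), map_zero, smul_zero]) n]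
    rw [Finset.smul_sum]
    apply Finset.sum_congr rfl
    intro j hj
    have hjn : j ≤ n := Finset.mem_range_succ_iff.mp hj
    have hmem : (D^(2*j)) A ∈ mp ⊔ mn := (hpow j).1
    rw [hUm _ hmem, hJc]
    rw [smul_smul]
    have he : 2*n - 2*j = 2*(n-j) := by omega
    rw [he]
    simp only [hFdef]
    have heven : ((-1:ℂ))^(2*j) = 1 := by
      rw [pow_mul]
      norm_num
    have harith : (((2*n).factorial:ℂ))⁻¹ * ((-1:ℂ)^(2*j) * (((2*n).choose (2*j)) : ℂ))
        = (((2*(n-j)).factorial : ℂ)⁻¹) * (((2*j).factorial : ℂ)⁻¹) := by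
      rw [heven, one_mul]
      have h2j : 2*j ≤ 2*n := by omega
      have h := Nat.choose_mul_factorial_mul_factorial h2j
      rw [he] at h
      have f1 : (((2*n).factorial):ℂ) ≠ 0 := Nat.cast_ne_zero.mpr (Nat.factorial_ne_zero _)
      have f2 : (((2*j).factorial):ℂ) ≠ 0 := Nat.cast_ne_zero.mpr (Nat.factorial_ne_zero _)
      have f3 : (((2*(n-j)).factorial):ℂ) ≠ 0 := Nat.cast_ne_zero.mpr (Nat.factorial_ne_zero _)
      field_simp
      rw [← h]
      push_cast
      ring
    rw [harith]
  -- LHS as a double sum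
  have hvecJA_inner : ∀ m : ℕ, Summable (fun j : ℕ =>
      (((2*j).factorial : ℂ)⁻¹) • (D^(2*m)) (Jc ((D^(2*j)) A))) := by
    intro m
    have h0 := hJA.map (D^(2*m)).toLinearMap.toAddMonoidHom (D^(2*m)).continuous
    apply Summable.congr h0
    intro j
    exact (D^(2*m)).map_smul _ _
  have e1 : Sop bra Z A = ∑' j : ℕ, (((2*j).factorial : ℂ)⁻¹) • (D^(2*j)) A := by
    simp only [Sop]
    rw [← hD, tsum_apply_op hop A]
    exact tsum_congr fun n => by simp
  have e2 : J (Sop bra Z A) = ∑' j : ℕ, (((2*j).factorial : ℂ)⁻¹) • Jc ((D^(2*j)) A) := by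
    rw [e1, hJc, Jc.map_tsum hvecA]
    exact tsum_congr fun j => by simp
  have e3 : Sop bra Z (J (Sop bra Z A)) = ∑' m : ℕ, ∑' j : ℕ, F (m, j) := by
    rw [e2]
    simp only [Sop]
    rw [← hD, tsum_apply_op hop _]
    apply tsum_congr
    intro m
    rw [ContinuousLinearMap.smul_apply, (D^(2*m)).map_tsum hJA]
    have estep : (∑' j : ℕ, (D^(2*m)) ((((2*j).factorial : ℂ)⁻¹) • Jc ((D^(2*j)) A)))
        = ∑' j : ℕ, (((2*j).factorial : ℂ)⁻¹) • (D^(2*m)) (Jc ((D^(2*j)) A)) :=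
      tsum_congr fun j => by simp
    rw [estep, ← Summable.tsum_const_smul ((((2*m).factorial : ℂ))⁻¹) (hvecJA_inner m)]
    exact tsum_congr fun j => by
      rw [smul_smul]
      all_goals simp only [hFdef]
  -- RHS reduction
  have hnegD : adC bra (-Z) = -D := by
    ext w
    rw [hD]
    simp only [adC_apply, map_neg, LinearMap.neg_apply, ContinuousLinearMap.neg_apply]
  have hexp1 : expOp D Υ = ∑' n : ℕ, ((n.factorial:ℂ)⁻¹) • (D^n) Υ := by
    simp only [expOp]
    rw [tsum_apply_op (summable_exp_op D) Υ]
    exact tsum_congr fun n => by simp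
  have hnegpow : ∀ n : ℕ, (-D)^n = ((-1:ℂ)^n) • D^n := by
    intro n
    rw [← neg_one_smul ℂ D, smul_pow]
  have hexp2 : expOp (adC bra (-Z)) Υ = ∑' n : ℕ, (((-1:ℂ))^n * (n.factorial:ℂ)⁻¹) • (D^n) Υ := by
    rw [hnegD]
    simp only [expOp]
    rw [tsum_apply_op (summable_exp_op (-D)) Υ]
    exact tsum_congr fun n => by
      rw [ContinuousLinearMap.smul_apply, hnegpow n, ContinuousLinearMap.smul_apply, smul_smul,
        mul_comm]
  have hsum_posvec : Summable (fun n : ℕ => ((n.factorial:ℂ)⁻¹) • (D^n) Υ) := by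
    have := summable_apply_s8 (summable_exp_op D) Υ
    simpa using this
  have hsum_negvec : Summable (fun n : ℕ => (((-1:ℂ))^n * (n.factorial:ℂ)⁻¹) • (D^n) Υ) := by
    have h0 := summable_apply_s8 (summable_exp_op (-D)) Υ
    apply Summable.congr h0
    intro n
    rw [ContinuousLinearMap.smul_apply, hnegpow n, ContinuousLinearMap.smul_apply, smul_smul,
      mul_comm]
  have hadd : expOp D Υ + expOp (adC bra (-Z)) Υ
      = ∑' n : ℕ, (((1:ℂ) + (-1)^n) * (n.factorial:ℂ)⁻¹) • (D^n) Υ := by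
    rw [hexp1, hexp2, ← Summable.tsum_add hsum_posvec hsum_negvec]
    exact tsum_congr fun n => by
      rw [← add_smul]
      congr 1
      ring
  have hhalf : expOp D Υ + expOp (adC bra (-Z)) Υ
      = ∑' j : ℕ, ((2:ℂ) * (((2*j).factorial:ℂ))⁻¹) • ((D^(2*j)) Υ) := by
    rw [hadd]
    rw [← Function.Injective.tsum_eq (g := fun j : ℕ => 2*j)
      (fun a b h => by dsimp only at h; omega)
      (f := fun n : ℕ => (((1:ℂ) + (-1)^n) * (n.factorial:ℂ)⁻¹) • (D^n) Υ)
      (by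
        intro x hx
        by_contra hnx
        apply hx
        have hodd : Odd x := by
          rcases Nat.even_or_odd x with he | ho
          · obtain ⟨r, hr⟩ := he
            exact absurd ⟨r, by dsimp only; omega⟩ hnx
          · exact ho
        obtain ⟨j, rfl⟩ := hodd
        have hm1 : ((-1:ℂ))^(2*j+1) = -1 := Odd.neg_one_pow ⟨j, by ring⟩
        simp only [hm1]
        norm_num)]
    exact tsum_congr fun j => by
      congr 1
      have hm1 : ((-1:ℂ))^(2*j) = 1 := by
        rw [pow_mul]
        norm_num
      rw [hm1]
      norm_num
  have hsum2 : Summable (fun j : ℕ => ((2:ℂ) * (((2*j).factorial:ℂ))⁻¹) • ((D^(2*j)) Υ)) := by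
    apply Summable.congr (hvecU.const_smul (2:ℂ))
    intro j
    rw [smul_smul]
  have hψ : ∀ v : L, bra v A = (LinearMap.toContinuousLinearMap (bra.flip A)) v := fun v => rfl
  have hsum3 : Summable (fun j : ℕ =>
      (LinearMap.toContinuousLinearMap (bra.flip A)) (((2:ℂ) * (((2*j).factorial:ℂ))⁻¹) • ((D^(2*j)) Υ))) := by
    have h0 := hsum2.map (LinearMap.toContinuousLinearMap (bra.flip A)).toLinearMap.toAddMonoidHom
      (LinearMap.toContinuousLinearMap (bra.flip A)).continuous
    apply Summable.congr h0
    intro j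
    simp [Function.comp]
  have hRHS : (2:ℂ)⁻¹ • bra (expOp D Υ + expOp (adC bra (-Z)) Υ) A
      = ∑' n : ℕ, (((2*n).factorial:ℂ)⁻¹) • bra ((D^(2*n)) Υ) A := by
    rw [hhalf, hψ, (LinearMap.toContinuousLinearMap (bra.flip A)).map_tsum hsum2,
      ← Summable.tsum_const_smul ((2:ℂ)⁻¹) hsum3]
    exact tsum_congr fun j => by
      rw [map_smul, smul_smul, ← mul_assoc, inv_mul_cancel₀ (two_ne_zero), one_mul]
      rw [← hψ]
  -- the Cauchy-product style bridge
  have hbridge : (∑' m : ℕ, ∑' j : ℕ, F (m, j)) = ∑' n : ℕ, ∑ j ∈ Finset.range (n+1), F (n-j, j) := by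
    rw [← Summable.tsum_prod' hF hF.prod_factor]
    rw [← Finset.HasAntidiagonal.sigmaAntidiagonalEquivProd.tsum_eq F]
    rw [Summable.tsum_sigma'
      (f := fun σ : (Σ n : ℕ, {x // x ∈ Finset.HasAntidiagonal.antidiagonal n}) =>
        F (Finset.HasAntidiagonal.sigmaAntidiagonalEquivProd σ))
      (fun n => Summable.of_finite)
      (((Finset.HasAntidiagonal.sigmaAntidiagonalEquivProd.summable_iff).mpr hF).congr (fun _ => rfl))]
    apply tsum_congr
    intro n
    refine (Finset.tsum_subtype (Finset.HasAntidiagonal.antidiagonal n) F).trans ?_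
    rw [Finset.Nat.sum_antidiagonal_eq_sum_range_succ_mk F n,
      ← Finset.sum_range_reflect (fun k => F (k, n - k)) (n+1)]
    apply Finset.sum_congr rfl
    intro j hj
    have hjn : j ≤ n := Finset.mem_range_succ_iff.mp hj
    show F (n + 1 - 1 - j, n - (n + 1 - 1 - j)) = F (n - j, j)
    have h1 : n + 1 - 1 - j = n - j := by omega
    have h2 : n - (n - j) = j := by omega
    rw [h1, h2]
  rw [e3, hbridge, hRHS]
  exact tsum_congr fun n => (hkey n).symm
end
end

section
/- For every Z ∈ m, the element P(Z) = ⁅Υ, exp(ad_Z)(Υ)⁆ lies in m, and P(Z) = -J(E_Z(JZ)) = E_{JZ}(Z). -/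
noncomputable section

variable {L : Type*} [NormedAddCommGroup L] [NormedSpace ℂ L] [FiniteDimensional ℂ L]

lemma aux_norm_pow_le (T : L →L[ℂ] L) (n : ℕ) : ‖T ^ n‖ ≤ ‖T‖ ^ n := by
  cases n with
  | zero => simpa [ContinuousLinearMap.one_def] using ContinuousLinearMap.norm_id_le
  | succ n => exact norm_pow_le' T n.succ_pos

lemma aux_summable (T : L →L[ℂ] L) (c e : ℕ → ℕ) (h : ∀ n, n ≤ c n) (h2 : ∀ n, e n ≤ 2 * n) :
    Summable (fun n : ℕ => (((c n).factorial : ℂ)⁻¹) • T ^ (e n)) := by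
  apply Summable.of_norm
  have hb : ∀ n : ℕ, ‖(((c n).factorial : ℂ)⁻¹) • T ^ (e n)‖ ≤
      (max ‖T‖ 1) ^ (2 * n) / (n.factorial : ℝ) := by
    intro n
    rw [norm_smul (((c n).factorial : ℂ))⁻¹ (T ^ (e n))]
    have h1 : ‖((c n).factorial : ℂ)⁻¹‖ = (((c n).factorial : ℝ))⁻¹ := by simp
    rw [h1]
    have hc1 : (((c n).factorial : ℝ))⁻¹ ≤ ((n.factorial : ℝ))⁻¹ := by
      apply inv_anti₀
      · exact_mod_cast Nat.factorial_pos n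
      · exact_mod_cast Nat.factorial_le (h n)
    have hc2 : ‖T ^ (e n)‖ ≤ (max ‖T‖ 1) ^ (2 * n) := by
      calc ‖T ^ (e n)‖ ≤ ‖T‖ ^ (e n) := aux_norm_pow_le T (e n)
        _ ≤ (max ‖T‖ 1) ^ (e n) := pow_le_pow_left₀ (norm_nonneg T) (le_max_left _ _) _
        _ ≤ (max ‖T‖ 1) ^ (2 * n) := pow_le_pow_right₀ (le_max_right _ _) (h2 n)
    calc (((c n).factorial : ℝ))⁻¹ * ‖T ^ (e n)‖
        ≤ ((n.factorial : ℝ))⁻¹ * (max ‖T‖ 1) ^ (2 * n) := by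
          apply mul_le_mul hc1 hc2 (norm_nonneg _)
          positivity
      _ = (max ‖T‖ 1) ^ (2 * n) / (n.factorial : ℝ) := by ring
  apply Summable.of_nonneg_of_le (fun n => norm_nonneg _) hb
  have := Real.summable_pow_div_factorial ((max ‖T‖ 1) ^ 2)
  simpa [pow_mul] using this

lemma aux_tsum_mem (S : Submodule ℂ L) (f : ℕ → L) (h : ∀ n, f n ∈ S) : ∑' n, f n ∈ S := by
  by_cases hs : Summable f
  · have hcl : IsClosed (S : Set L) := S.closed_of_finiteDimensional
    refine hcl.mem_of_tendsto hs.hasSum.tendsto_sum_nat ?_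
    exact Filter.Eventually.of_forall fun s => sum_mem fun i _ => h i
  · rw [tsum_eq_zero_of_not_summable hs]; exact S.zero_mem

lemma aux_heval (f : ℕ → (L →L[ℂ] L)) (v : L) (hf : Summable f) :
    (∑' n, f n) v = ∑' n, f n v := by
  have := (ContinuousLinearMap.apply ℂ L v).map_tsum hf
  simpa using this

lemma aux_hsummap (f : ℕ → (L →L[ℂ] L)) (v : L) (hf : Summable f) :
    Summable fun n => f n v := by
  have := hf.map (ContinuousLinearMap.apply ℂ L v)
    (ContinuousLinearMap.apply ℂ L v).continuous
  exact this

/-- For every Z ∈ m, P(Z) = ⁅Υ, exp(ad_Z)(Υ)⁆ lies in m, and P(Z) = -J(E_Z(JZ)) = E_{JZ}(Z). -/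
theorem statement9 {L : Type*} [NormedAddCommGroup L] [NormedSpace ℂ L] [FiniteDimensional ℂ L]
    (bra : L →ₗ[ℂ] L →ₗ[ℂ] L)
    (halt : ∀ x : L, bra x x = 0)
    (hjac : ∀ x y z : L, bra x (bra y z) = bra (bra x y) z + bra y (bra x z))
    (k mp mn : Submodule ℂ L)
    (hsup : k ⊔ (mp ⊔ mn) = ⊤)
    (hd1 : Disjoint k (mp ⊔ mn))
    (hd2 : Disjoint mp mn)
    (hkk : ∀ x ∈ k, ∀ y ∈ k, bra x y ∈ k)
    (hkp : ∀ x ∈ k, ∀ y ∈ mp, bra x y ∈ mp)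
    (hkn : ∀ x ∈ k, ∀ y ∈ mn, bra x y ∈ mn)
    (hpp : ∀ x ∈ mp, ∀ y ∈ mp, bra x y = 0)
    (hnn : ∀ x ∈ mn, ∀ y ∈ mn, bra x y = 0)
    (hpn : ∀ x ∈ mp, ∀ y ∈ mn, bra x y ∈ k)
    (J : L →ₗ[ℂ] L)
    (hJp : ∀ x ∈ mp, J x = Complex.I • x)
    (hJn : ∀ x ∈ mn, J x = -(Complex.I • x))
    (Υ : L)
    (hUk : ∀ X ∈ k, bra Υ X = 0)
    (hUm : ∀ W ∈ mp ⊔ mn, bra Υ W = J W)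
    (Z : L) (hZ : Z ∈ mp ⊔ mn) :
    bra Υ (expOp (adC bra Z) Υ) ∈ mp ⊔ mn ∧
    bra Υ (expOp (adC bra Z) Υ) = -(J (Eop bra Z (J Z))) ∧
    bra Υ (expOp (adC bra Z) Υ) = Eop bra (J Z) Z := by
  classical
  have hpm : mp ≤ mp ⊔ mn := le_sup_left
  have hnm : mn ≤ mp ⊔ mn := le_sup_right
  have hskew : ∀ x y : L, bra x y = -bra y x := by
    intro x y
    have h := halt (x + y)
    simp only [map_add, LinearMap.add_apply, halt, zero_add, add_zero] at h
    exact eq_neg_of_add_eq_zero_right h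
  have hbra_mm : ∀ x ∈ mp ⊔ mn, ∀ y ∈ mp ⊔ mn, bra x y ∈ k := by
    intro x hx y hy
    obtain ⟨p, hp, q, hq, rfl⟩ := Submodule.mem_sup.mp hx
    obtain ⟨p', hp', q', hq', rfl⟩ := Submodule.mem_sup.mp hy
    simp only [map_add, LinearMap.add_apply]
    refine add_mem (add_mem ?_ ?_) (add_mem ?_ ?_)
    · rw [hpp p hp p' hp']; exact k.zero_mem
    · rw [hskew q p']; exact neg_mem (hpn p' hp' q hq)
    · exact hpn p hp q' hq'
    · rw [hnn q hq q' hq']; exact k.zero_mem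
  have hbra_mk : ∀ x ∈ mp ⊔ mn, ∀ y ∈ k, bra x y ∈ mp ⊔ mn := by
    intro x hx y hy
    obtain ⟨p, hp, q, hq, rfl⟩ := Submodule.mem_sup.mp hx
    simp only [map_add, LinearMap.add_apply]
    refine add_mem (hpm ?_) (hnm ?_)
    · rw [hskew p y]; exact neg_mem (hkp y hy p hp)
    · rw [hskew q y]; exact neg_mem (hkn y hy q hq)
  have hJm : ∀ x ∈ mp ⊔ mn, J x ∈ mp ⊔ mn := by
    intro x hx
    obtain ⟨p, hp, q, hq, rfl⟩ := Submodule.mem_sup.mp hx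
    rw [map_add, hJp p hp, hJn q hq]
    exact add_mem (hpm (mp.smul_mem _ hp)) (hnm (neg_mem (mn.smul_mem _ hq)))
  have hJJ : ∀ x ∈ mp ⊔ mn, J (J x) = -x := by
    intro x hx
    obtain ⟨p, hp, q, hq, rfl⟩ := Submodule.mem_sup.mp hx
    have h1 : J (J p) = -p := by
      rw [hJp p hp, map_smul, hJp p hp, smul_smul, Complex.I_mul_I, neg_one_smul]
    have h2 : J (J q) = -q := by
      rw [hJn q hq, map_neg, map_smul, hJn q hq]
      simp [smul_smul, Complex.I_mul_I]
    rw [map_add, map_add, h1, h2, neg_add]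
  have hswap : ∀ x ∈ mp ⊔ mn, ∀ y ∈ mp ⊔ mn, bra x (J y) = -(bra (J x) y) := by
    intro x hx y hy
    obtain ⟨p, hp, q, hq, rfl⟩ := Submodule.mem_sup.mp hx
    obtain ⟨p', hp', q', hq', rfl⟩ := Submodule.mem_sup.mp hy
    rw [map_add J, map_add J, hJp p hp, hJn q hq, hJp p' hp', hJn q' hq']
    simp only [map_add, map_smul, map_neg, LinearMap.add_apply, LinearMap.smul_apply,
      LinearMap.neg_apply, hpp p hp p' hp', hnn q hq q' hq', smul_zero, neg_zero,
      zero_add, add_zero]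
    module
  have hJbk : ∀ x ∈ mp ⊔ mn, ∀ y ∈ k, bra (J x) y = J (bra x y) := by
    intro x hx y hy
    obtain ⟨p, hp, q, hq, rfl⟩ := Submodule.mem_sup.mp hx
    have hpy : bra p y ∈ mp := by rw [hskew p y]; exact neg_mem (hkp y hy p hp)
    have hqy : bra q y ∈ mn := by rw [hskew q y]; exact neg_mem (hkn y hy q hq)
    rw [map_add J, hJp p hp, hJn q hq]
    simp only [map_add, map_smul, map_neg, LinearMap.add_apply, LinearMap.smul_apply,
      LinearMap.neg_apply]
    rw [hJp _ hpy, hJn _ hqy]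
  -- the adjoint operator applied
  have hadC : ∀ (w x : L), adC bra w x = bra w x := fun w x => rfl
  -- the sequence a n = ad_Z^n (J Z)
  set a : ℕ → L := fun n => (adC bra Z ^ n) (J Z) with hadefn
  have ha0 : a 0 = J Z := by simp [hadefn]
  have hasucc : ∀ n, a (n + 1) = bra Z (a n) := by
    intro n
    rw [hadefn]
    simp only
    rw [pow_succ', ContinuousLinearMap.mul_apply]
    rfl
  have ham : ∀ n : ℕ, a (2 * n) ∈ mp ⊔ mn ∧ a (2 * n + 1) ∈ k := by
    intro n
    induction n with
    | zero =>
      refine ⟨?_, ?_⟩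
      · rw [show (2 * 0 : ℕ) = 0 from rfl, ha0]; exact hJm Z hZ
      · rw [show (2 * 0 + 1 : ℕ) = 0 + 1 from rfl, hasucc, ha0]
        exact hbra_mm Z hZ (J Z) (hJm Z hZ)
    | succ n ih =>
      have e1 : 2 * (n + 1) = (2 * n + 1) + 1 := by ring
      have e2 : 2 * (n + 1) + 1 = (2 * n + 1) + 1 + 1 := by ring
      refine ⟨?_, ?_⟩
      · rw [e1, hasucc]; exact hbra_mk Z hZ _ ih.2
      · rw [e2, hasucc, hasucc]
        exact hbra_mm Z hZ _ (hbra_mk Z hZ _ ih.2)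
  -- the square of ad_{JZ} on m
  have hBsq : ∀ w ∈ mp ⊔ mn, bra (J Z) (bra (J Z) w) = -(J (bra Z (bra Z (J w)))) := by
    intro w hw
    have h1 : bra (J Z) w = -(bra Z (J w)) := by
      have := hswap Z hZ w hw
      rw [this, neg_neg]
    have hk1 : bra Z (J w) ∈ k := hbra_mm Z hZ (J w) (hJm w hw)
    rw [h1, map_neg, hJbk Z hZ _ hk1]
  have hB2 : ∀ n : ℕ, ((adC bra (J Z)) ^ (2 * n)) Z = -(J (a (2 * n))) := by
    intro n
    induction n with
    | zero =>
      rw [show (2 * 0 : ℕ) = 0 from rfl, pow_zero, ha0, hJJ Z hZ, neg_neg]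
      rfl
    | succ n ih =>
      have e1 : 2 * (n + 1) = (2 * n) + 1 + 1 := by ring
      rw [e1]
      simp only [pow_succ', ContinuousLinearMap.mul_apply]
      rw [ih]
      have hw := (ham n).1
      have hJw : J (a (2 * n)) ∈ mp ⊔ mn := hJm _ hw
      rw [map_neg, map_neg]
      simp only [hadC]
      rw [hBsq _ hJw, hJJ _ hw, hasucc, hasucc]
      simp only [map_neg, neg_neg]
  -- summability
  have hsumExp : Summable (fun n : ℕ => ((n.factorial : ℂ)⁻¹) • (adC bra Z) ^ n) :=
    aux_summable _ id id (fun n => le_refl n) (fun n => by dsimp only [id]; omega)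
  have hsumE : Summable (fun n : ℕ => (((2 * n + 1).factorial : ℂ)⁻¹) • (adC bra Z) ^ (2 * n)) :=
    aux_summable _ (fun n => 2 * n + 1) (fun n => 2 * n) (fun n => by omega) (fun n => le_refl _)
  have hsumEB : Summable
      (fun n : ℕ => (((2 * n + 1).factorial : ℂ)⁻¹) • (adC bra (J Z)) ^ (2 * n)) :=
    aux_summable _ (fun n => 2 * n + 1) (fun n => 2 * n) (fun n => by omega) (fun n => le_refl _)
  -- the exponential applied to Υ
  have h1 : expOp (adC bra Z) Υ = ∑' n : ℕ, ((n.factorial : ℂ)⁻¹) • ((adC bra Z ^ n) Υ) := by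
    unfold expOp
    rw [aux_heval _ _ hsumExp]
    exact tsum_congr fun n => by rw [ContinuousLinearMap.smul_apply]
  have hsumv : Summable (fun n : ℕ => ((n.factorial : ℂ)⁻¹) • ((adC bra Z ^ n) Υ)) := by
    have := aux_hsummap _ Υ hsumExp
    simpa [ContinuousLinearMap.smul_apply] using this
  set g : ℕ → L := fun n => ((n.factorial : ℂ)⁻¹) • bra Υ ((adC bra Z ^ n) Υ) with hgdefn
  have h2 : bra Υ (expOp (adC bra Z) Υ) = ∑' n : ℕ, g n := by
    rw [h1]
    have h3 := (adC bra Υ).map_tsum hsumv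
    simp only [hadC, map_smul] at h3
    rw [h3]
  -- the values of the terms
  have hpowU : ∀ n, (adC bra Z ^ (n + 1)) Υ = -(a n) := by
    intro n
    rw [pow_succ, ContinuousLinearMap.mul_apply]
    have hAU : adC bra Z Υ = -(J Z) := by
      rw [hadC, hskew Z Υ, hUm Z hZ]
    rw [hAU, map_neg, hadefn]
  have hg0 : g 0 = 0 := by
    rw [hgdefn]
    simp [halt]
  have hgodd : ∀ kk : ℕ,
      g (2 * kk + 1) = -((((2 * kk + 1).factorial : ℂ)⁻¹) • J (a (2 * kk))) := by
    intro kk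
    rw [hgdefn]
    simp only
    rw [hpowU (2 * kk), map_neg, hUm _ (ham kk).1, smul_neg]
  have hgeven : ∀ kk : ℕ, g (2 * kk + 2) = 0 := by
    intro kk
    rw [hgdefn]
    simp only
    rw [show 2 * kk + 2 = (2 * kk + 1) + 1 from rfl, hpowU (2 * kk + 1), map_neg,
      hUk _ (ham kk).2, neg_zero, smul_zero]
  have hmain : ∑' n, g n = ∑' kk : ℕ, g (2 * kk + 1) := by
    symm
    refine Function.Injective.tsum_eq (g := fun kk : ℕ => 2 * kk + 1)
      (fun x y h => by dsimp only at h; omega) ?_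
    intro n hn
    simp only [Function.mem_support] at hn
    by_contra hnr
    apply hn
    rcases Nat.even_or_odd n with he | ho
    · obtain ⟨r, hr⟩ := he
      cases r with
      | zero => rw [show n = 0 by omega]; exact hg0
      | succ r => rw [show n = 2 * r + 2 by omega]; exact hgeven r
    · exfalso
      apply hnr
      obtain ⟨r, hr⟩ := ho
      exact ⟨r, by dsimp only; omega⟩
  have hPZ : bra Υ (expOp (adC bra Z) Υ)
      = ∑' kk : ℕ, -((((2 * kk + 1).factorial : ℂ)⁻¹) • J (a (2 * kk))) := by
    rw [h2, hmain]
    exact tsum_congr fun kk => hgodd kk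
  -- the E side
  have hE1 : Eop bra Z (J Z) = ∑' n : ℕ, (((2 * n + 1).factorial : ℂ)⁻¹) • (a (2 * n)) := by
    unfold Eop
    rw [aux_heval _ _ hsumE]
    refine tsum_congr fun n => ?_
    simp only [ContinuousLinearMap.smul_apply, hadefn]
  have hsumEv : Summable (fun n : ℕ => (((2 * n + 1).factorial : ℂ)⁻¹) • (a (2 * n))) := by
    have := aux_hsummap _ (J Z) hsumE
    simp only [ContinuousLinearMap.smul_apply] at this
    simpa only [hadefn] using this
  have hE2 : -(J (Eop bra Z (J Z)))
      = ∑' kk : ℕ, -((((2 * kk + 1).factorial : ℂ)⁻¹) • J (a (2 * kk))) := by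
    rw [hE1]
    have hJc := (LinearMap.toContinuousLinearMap J).map_tsum hsumEv
    simp only [LinearMap.coe_toContinuousLinearMap'] at hJc
    rw [hJc, ← tsum_neg]
    exact tsum_congr fun kk => by rw [map_smul]
  have hE3 : Eop bra (J Z) Z
      = ∑' kk : ℕ, -((((2 * kk + 1).factorial : ℂ)⁻¹) • J (a (2 * kk))) := by
    unfold Eop
    rw [aux_heval _ _ hsumEB]
    refine tsum_congr fun n => ?_
    rw [ContinuousLinearMap.smul_apply, hB2 n, smul_neg]
  refine ⟨?_, ?_, ?_⟩
  · rw [hPZ]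
    exact aux_tsum_mem _ _ fun kk =>
      neg_mem (Submodule.smul_mem _ _ (hJm _ (ham kk).1))
  · rw [hPZ, hE2]
  · rw [hPZ, hE3]
end
end

section
/- The map P satisfies: (1) P(JZ) = J(P(Z)) for every Z ∈ m; (2) if Z ∈ m⁺ or Z ∈ m⁻, then P(Z) = Z; (3) P(-Z) = -P(Z) for every Z ∈ m. -/
noncomputable section

variable {L : Type*} [NormedAddCommGroup L] [NormedSpace ℂ L] [FiniteDimensional ℂ L]

/-- Expansion of `bra Υ (expOp T Υ)` as a series. -/
theorem expand_aux {L : Type*} [NormedAddCommGroup L] [NormedSpace ℂ L] [FiniteDimensional ℂ L]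
    (bra : L →ₗ[ℂ] L →ₗ[ℂ] L) (Υ : L) (T : L →L[ℂ] L) :
    bra Υ (expOp T Υ) = ∑' n : ℕ, ((n.factorial : ℂ)⁻¹) • bra Υ ((T ^ n) Υ) := by
  have hs : Summable fun n : ℕ => ((n.factorial : ℂ)⁻¹) • T ^ n :=
    NormedSpace.expSeries_summable' T
  have h1 : expOp T Υ = ∑' n : ℕ, ((n.factorial : ℂ)⁻¹) • (T ^ n) Υ := by
    rw [expOp]
    exact ((ContinuousLinearMap.apply ℂ L Υ).map_tsum hs).trans (by rfl)
  have hs1 : Summable fun n : ℕ => ((n.factorial : ℂ)⁻¹) • (T ^ n) Υ :=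
    (hs.mapL (ContinuousLinearMap.apply ℂ L Υ)).congr (fun n => rfl)
  have h2 : (adC bra Υ) (∑' n : ℕ, ((n.factorial : ℂ)⁻¹) • (T ^ n) Υ)
      = ∑' n : ℕ, ((n.factorial : ℂ)⁻¹) • bra Υ ((T ^ n) Υ) := by
    refine ((adC bra Υ).map_tsum hs1).trans (tsum_congr fun n => ?_)
    exact (adC bra Υ).map_smul _ _
  rw [h1]
  exact h2

theorem summable_aux_s10 {L : Type*} [NormedAddCommGroup L] [NormedSpace ℂ L] [FiniteDimensional ℂ L]
    (bra : L →ₗ[ℂ] L →ₗ[ℂ] L) (Υ : L) (T : L →L[ℂ] L) :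
    Summable fun n : ℕ => ((n.factorial : ℂ)⁻¹) • bra Υ ((T ^ n) Υ) := by
  have hs : Summable fun n : ℕ => ((n.factorial : ℂ)⁻¹) • T ^ n :=
    NormedSpace.expSeries_summable' T
  have := hs.mapL ((adC bra Υ).comp (ContinuousLinearMap.apply ℂ L Υ))
  refine this.congr fun n => ?_
  simp only [ContinuousLinearMap.coe_comp', Function.comp_apply,
    ContinuousLinearMap.apply_apply, ContinuousLinearMap.smul_apply, map_smul]
  rfl

/-- The map P(Z) = ⁅Υ, exp(ad_Z)(Υ)⁆ satisfies: (1) P(JZ) = J(P(Z)) for Z ∈ m; (2) P(Z) = Z when Z ∈ m⁺ or Z ∈ m⁻; (3) P(-Z) = -P(Z) for Z ∈ m. -/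
theorem statement10 {L : Type*} [NormedAddCommGroup L] [NormedSpace ℂ L] [FiniteDimensional ℂ L]
    (bra : L →ₗ[ℂ] L →ₗ[ℂ] L)
    (halt : ∀ x : L, bra x x = 0)
    (hjac : ∀ x y z : L, bra x (bra y z) = bra (bra x y) z + bra y (bra x z))
    (k mp mn : Submodule ℂ L)
    (hsup : k ⊔ (mp ⊔ mn) = ⊤)
    (hd1 : Disjoint k (mp ⊔ mn))
    (hd2 : Disjoint mp mn)
    (hkk : ∀ x ∈ k, ∀ y ∈ k, bra x y ∈ k)
    (hkp : ∀ x ∈ k, ∀ y ∈ mp, bra x y ∈ mp)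
    (hkn : ∀ x ∈ k, ∀ y ∈ mn, bra x y ∈ mn)
    (hpp : ∀ x ∈ mp, ∀ y ∈ mp, bra x y = 0)
    (hnn : ∀ x ∈ mn, ∀ y ∈ mn, bra x y = 0)
    (hpn : ∀ x ∈ mp, ∀ y ∈ mn, bra x y ∈ k)
    (J : L →ₗ[ℂ] L)
    (hJp : ∀ x ∈ mp, J x = Complex.I • x)
    (hJn : ∀ x ∈ mn, J x = -(Complex.I • x))
    (Υ : L)
    (hUk : ∀ X ∈ k, bra Υ X = 0)
    (hUm : ∀ W ∈ mp ⊔ mn, bra Υ W = J W) :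
    (∀ Z ∈ mp ⊔ mn, bra Υ (expOp (adC bra (J Z)) Υ) = J (bra Υ (expOp (adC bra Z) Υ))) ∧
    (∀ Z : L, (Z ∈ mp ∨ Z ∈ mn) → bra Υ (expOp (adC bra Z) Υ) = Z) ∧
    (∀ Z ∈ mp ⊔ mn, bra Υ (expOp (adC bra (-Z)) Υ) = -(bra Υ (expOp (adC bra Z) Υ))) := by
  -- antisymmetry
  have hanti : ∀ x y : L, bra x y = -bra y x := by
    intro x y
    have h := halt (x + y)
    simp only [map_add, LinearMap.add_apply, halt, zero_add, add_zero] at h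
    exact eq_neg_of_add_eq_zero_right h
  -- J maps m to m
  have hJJ : ∀ W ∈ mp ⊔ mn, J (J W) = -W := by
    intro W hW
    rcases Submodule.mem_sup.mp hW with ⟨Wp, hWp, Wn, hWn, hWeq⟩
    rw [← hWeq, map_add, hJp _ hWp, hJn _ hWn, map_add, map_neg, map_smul, map_smul,
      hJp _ hWp, hJn _ hWn, smul_smul, Complex.I_mul_I, smul_neg, smul_smul,
      Complex.I_mul_I]
    module
  have hJm : ∀ W ∈ mp ⊔ mn, J W ∈ mp ⊔ mn := by
    intro W hW
    rcases Submodule.mem_sup.mp hW with ⟨Wp, hWp, Wn, hWn, hWeq⟩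
    rw [← hWeq, map_add, hJp _ hWp, hJn _ hWn]
    exact Submodule.add_mem _ (Submodule.mem_sup_left (mp.smul_mem _ hWp))
      (Submodule.mem_sup_right (mn.neg_mem (mn.smul_mem _ hWn)))
  -- power application helper
  have hpow : ∀ (T : L →L[ℂ] L) (n : ℕ) (x : L), (T ^ (n + 1)) x = T ((T ^ n) x) := by
    intro T n x
    rw [pow_succ']
    rfl
  -- adC applies as bra
  have hadC : ∀ (Y x : L), (adC bra Y) x = bra Y x := fun _ _ => rfl
  -- termwise lemma for parts 1 and 3
  have termwise : ∀ Z ∈ mp ⊔ mn, ∀ n : ℕ,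
      bra Υ (((adC bra (J Z)) ^ n) Υ) = J (bra Υ (((adC bra Z) ^ n) Υ)) ∧
      bra Υ (((adC bra (-Z)) ^ n) Υ) = -(bra Υ (((adC bra Z) ^ n) Υ)) := by
    intro Z hZ
    rcases Submodule.mem_sup.mp hZ with ⟨Zp, hZp, Zn, hZn, hZeq⟩
    have hJZ : J Z = Complex.I • Zp - Complex.I • Zn := by
      rw [← hZeq, map_add, hJp _ hZp, hJn _ hZn, sub_eq_add_neg]
    -- m bracket m ∈ k
    have hm2k : ∀ W ∈ mp ⊔ mn, bra Z W ∈ k := by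
      intro W hW
      rcases Submodule.mem_sup.mp hW with ⟨Wp, hWp, Wn, hWn, hWeq⟩
      have heq : bra Z W = bra Zp Wn + bra Zn Wp := by
        rw [← hZeq, ← hWeq]
        simp only [map_add, LinearMap.add_apply, hpp _ hZp _ hWp, hnn _ hZn _ hWn]
        abel
      rw [heq]
      refine Submodule.add_mem _ (hpn _ hZp _ hWn) ?_
      rw [hanti Zn Wp]
      exact k.neg_mem (hpn _ hWp _ hZn)
    -- m bracket k ∈ m
    have hk2m : ∀ X ∈ k, bra Z X ∈ mp ⊔ mn := by
      intro X hX
      rw [← hZeq, map_add, LinearMap.add_apply]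
      refine Submodule.add_mem _ (Submodule.mem_sup_left ?_) (Submodule.mem_sup_right ?_)
      · rw [hanti Zp X]; exact mp.neg_mem (hkp _ hX _ hZp)
      · rw [hanti Zn X]; exact mn.neg_mem (hkn _ hX _ hZn)
    -- [JZ, X] = J [Z, X] for X ∈ k
    have hJK : ∀ X ∈ k, bra (J Z) X = J (bra Z X) := by
      intro X hX
      have hp1 : bra Zp X ∈ mp := by
        rw [hanti Zp X]; exact mp.neg_mem (hkp _ hX _ hZp)
      have hn1 : bra Zn X ∈ mn := by
        rw [hanti Zn X]; exact mn.neg_mem (hkn _ hX _ hZn)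
      rw [hJZ, ← hZeq, map_sub, map_smul, map_smul, LinearMap.sub_apply,
        LinearMap.smul_apply, LinearMap.smul_apply, map_add, LinearMap.add_apply,
        map_add, hJp _ hp1, hJn _ hn1, sub_eq_add_neg]
    -- [JZ, JW] = [Z, W] for W ∈ m
    have hMJ : ∀ W ∈ mp ⊔ mn, bra (J Z) (J W) = bra Z W := by
      intro W hW
      rcases Submodule.mem_sup.mp hW with ⟨Wp, hWp, Wn, hWn, hWeq⟩
      have hJW : J W = Complex.I • Wp - Complex.I • Wn := by
        rw [← hWeq, map_add, hJp _ hWp, hJn _ hWn, sub_eq_add_neg]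
      have h1 : bra Z W = bra Zp Wn + bra Zn Wp := by
        rw [← hZeq, ← hWeq]
        simp only [map_add, LinearMap.add_apply, hpp _ hZp _ hWp, hnn _ hZn _ hWn]
        abel
      have h2 : bra (J Z) (J W)
          = Complex.I • Complex.I • bra Zp Wp - Complex.I • Complex.I • bra Zp Wn
            - Complex.I • Complex.I • bra Zn Wp + Complex.I • Complex.I • bra Zn Wn := by
        rw [hJZ, hJW]
        simp only [map_sub, map_smul, LinearMap.sub_apply, LinearMap.smul_apply,
          smul_sub]
        module
      rw [h1, h2, hpp _ hZp _ hWp, hnn _ hZn _ hWn, smul_zero, smul_zero,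
        smul_smul, Complex.I_mul_I, smul_smul, Complex.I_mul_I]
      module
    -- invariant by induction
    have inv : ∀ n : ℕ,
        (((adC bra Z) ^ (2 * n + 1)) Υ ∈ mp ⊔ mn ∧
         ((adC bra (J Z)) ^ (2 * n + 1)) Υ = J (((adC bra Z) ^ (2 * n + 1)) Υ) ∧
         ((adC bra (-Z)) ^ (2 * n + 1)) Υ = -(((adC bra Z) ^ (2 * n + 1)) Υ)) ∧
        (((adC bra Z) ^ (2 * n + 2)) Υ ∈ k ∧
         ((adC bra (J Z)) ^ (2 * n + 2)) Υ = ((adC bra Z) ^ (2 * n + 2)) Υ ∧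
         ((adC bra (-Z)) ^ (2 * n + 2)) Υ = ((adC bra Z) ^ (2 * n + 2)) Υ) := by
      -- step from odd level to even level
      have stepOdd : ∀ m : ℕ,
          (((adC bra Z) ^ (m + 1)) Υ ∈ mp ⊔ mn ∧
           ((adC bra (J Z)) ^ (m + 1)) Υ = J (((adC bra Z) ^ (m + 1)) Υ) ∧
           ((adC bra (-Z)) ^ (m + 1)) Υ = -(((adC bra Z) ^ (m + 1)) Υ)) →
          (((adC bra Z) ^ (m + 2)) Υ ∈ k ∧
           ((adC bra (J Z)) ^ (m + 2)) Υ = ((adC bra Z) ^ (m + 2)) Υ ∧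
           ((adC bra (-Z)) ^ (m + 2)) Υ = ((adC bra Z) ^ (m + 2)) Υ) := by
        rintro m ⟨hmem, hB, hC⟩
        refine ⟨?_, ?_, ?_⟩
        · rw [hpow (adC bra Z) (m + 1) Υ, hadC]; exact hm2k _ hmem
        · rw [hpow (adC bra (J Z)) (m + 1) Υ, hpow (adC bra Z) (m + 1) Υ, hB,
            hadC, hadC, hMJ _ hmem]
        · rw [hpow (adC bra (-Z)) (m + 1) Υ, hpow (adC bra Z) (m + 1) Υ, hC,
            hadC, hadC, map_neg, map_neg bra Z, LinearMap.neg_apply, neg_neg]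
      -- step from even level to odd level
      have stepEven : ∀ m : ℕ,
          (((adC bra Z) ^ (m + 1)) Υ ∈ k ∧
           ((adC bra (J Z)) ^ (m + 1)) Υ = ((adC bra Z) ^ (m + 1)) Υ ∧
           ((adC bra (-Z)) ^ (m + 1)) Υ = ((adC bra Z) ^ (m + 1)) Υ) →
          (((adC bra Z) ^ (m + 2)) Υ ∈ mp ⊔ mn ∧
           ((adC bra (J Z)) ^ (m + 2)) Υ = J (((adC bra Z) ^ (m + 2)) Υ) ∧
           ((adC bra (-Z)) ^ (m + 2)) Υ = -(((adC bra Z) ^ (m + 2)) Υ)) := by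
        rintro m ⟨hmem, hB, hC⟩
        refine ⟨?_, ?_, ?_⟩
        · rw [hpow (adC bra Z) (m + 1) Υ, hadC]; exact hk2m _ hmem
        · rw [hpow (adC bra (J Z)) (m + 1) Υ, hpow (adC bra Z) (m + 1) Υ, hB,
            hadC, hadC, hJK _ hmem]
        · rw [hpow (adC bra (-Z)) (m + 1) Υ, hpow (adC bra Z) (m + 1) Υ, hC,
            hadC, hadC, map_neg, LinearMap.neg_apply]
      -- base odd level (exponent 1)
      have base : ((adC bra Z) ^ 1) Υ ∈ mp ⊔ mn ∧
          ((adC bra (J Z)) ^ 1) Υ = J (((adC bra Z) ^ 1) Υ) ∧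
          ((adC bra (-Z)) ^ 1) Υ = -(((adC bra Z) ^ 1) Υ) := by
        have h1 : ((adC bra Z) ^ 1) Υ = -(J Z) := by
          rw [pow_one, hadC, hanti Z Υ, hUm _ hZ]
        refine ⟨?_, ?_, ?_⟩
        · rw [h1]; exact Submodule.neg_mem _ (hJm _ hZ)
        · rw [pow_one, hadC, hanti (J Z) Υ, hUm _ (hJm _ hZ), h1, map_neg]
        · rw [pow_one, hadC, map_neg, LinearMap.neg_apply, pow_one, hadC]
      intro n
      induction n with
      | zero => exact ⟨base, stepOdd 0 base⟩
      | succ n ih =>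
        have e1 : 2 * (n + 1) + 1 = (2 * n + 2) + 1 := by ring
        have e2 : 2 * (n + 1) + 2 = (2 * n + 2) + 2 := by ring
        have hodd := stepEven (2 * n + 1) ih.2
        rw [e1, e2]
        exact ⟨hodd, stepOdd (2 * n + 2) hodd⟩
    -- now the termwise statement
    intro n
    match n with
    | 0 =>
      constructor <;> simp [halt]
    | (n + 1) =>
      rcases Nat.even_or_odd n with ⟨m, hm⟩ | ⟨m, hm⟩
      · -- n = 2m, n+1 = 2m+1 odd
        have e : n + 1 = 2 * m + 1 := by omega
        rw [e]
        obtain ⟨⟨hmem, hB, hC⟩, _⟩ := inv m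
        constructor
        · rw [hB, hUm _ (hJm _ hmem), hUm _ hmem]
        · rw [hC, map_neg]
      · -- n = 2m+1, n+1 = 2m+2 even
        have e : n + 1 = 2 * m + 2 := by omega
        rw [e]
        obtain ⟨_, ⟨hmem, hB, hC⟩⟩ := inv m
        constructor
        · rw [hB, hUk _ hmem, map_zero]
        · rw [hC, hUk _ hmem, neg_zero]
  refine ⟨?_, ?_, ?_⟩
  · -- part 1
    intro Z hZ
    rw [expand_aux, expand_aux]
    have hJ'app : ∀ x : L, (LinearMap.toContinuousLinearMap J) x = J x := fun x => by
      rw [LinearMap.coe_toContinuousLinearMap']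
    calc (∑' n : ℕ, ((n.factorial : ℂ)⁻¹) • bra Υ (((adC bra (J Z)) ^ n) Υ))
        = ∑' n : ℕ, (LinearMap.toContinuousLinearMap J)
            (((n.factorial : ℂ)⁻¹) • bra Υ (((adC bra Z) ^ n) Υ)) := by
          refine tsum_congr fun n => ?_
          rw [(termwise Z hZ n).1, map_smul, hJ'app]
      _ = (LinearMap.toContinuousLinearMap J)
            (∑' n : ℕ, ((n.factorial : ℂ)⁻¹) • bra Υ (((adC bra Z) ^ n) Υ)) :=
          ((LinearMap.toContinuousLinearMap J).map_tsum (summable_aux_s10 bra Υ _)).symm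
      _ = J (∑' n : ℕ, ((n.factorial : ℂ)⁻¹) • bra Υ (((adC bra Z) ^ n) Υ)) :=
          hJ'app _
  · -- part 2
    intro Z hZ
    rw [expand_aux]
    have hZm : Z ∈ mp ⊔ mn := by
      rcases hZ with h | h
      · exact Submodule.mem_sup_left h
      · exact Submodule.mem_sup_right h
    have hA1 : ((adC bra Z) ^ 1) Υ = -(J Z) := by
      rw [pow_one]
      show bra Z Υ = _
      rw [hanti Z Υ, hUm _ hZm]
    have hA2 : ((adC bra Z) ^ 2) Υ = 0 := by
      have : ((adC bra Z) ^ 2) Υ = bra Z (((adC bra Z) ^ 1) Υ) := by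
        rw [pow_succ']
        rfl
      rw [this, hA1]
      rcases hZ with h | h
      · rw [hJp _ h, map_neg, map_smul, halt, smul_zero, neg_zero]
      · rw [hJn _ h, neg_neg, map_smul, halt, smul_zero]
    have hAn : ∀ n : ℕ, ((adC bra Z) ^ (n + 2)) Υ = 0 := by
      intro n
      induction n with
      | zero => exact hA2
      | succ n ih =>
        have : ((adC bra Z) ^ (n + 3)) Υ = (adC bra Z) (((adC bra Z) ^ (n + 2)) Υ) := by
          rw [pow_succ']
          rfl
        rw [this, ih, map_zero]
    rw [tsum_eq_single 1 ?_]
    · -- the n = 1 term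
      rw [hA1, map_neg, hUm _ (hJm _ hZm), hJJ _ hZm, neg_neg]
      simp [Nat.factorial]
    · intro n hn
      match n, hn with
      | 0, _ => simp [halt]
      | (n + 2), _ => rw [hAn n, map_zero, smul_zero]
  · -- part 3
    intro Z hZ
    rw [expand_aux, expand_aux]
    rw [← tsum_neg]
    refine tsum_congr fun n => ?_
    rw [(termwise Z hZ n).2, smul_neg]
end
end

section
/- Let Z, A ∈ m and ν₁, ν₂ ∈ ℂ satisfy ad_Z²(A) = ν₁·A and ad_{JZ}²(A) = ν₂·A. Then ad_Z²(JA) = ν₂·(JA) and ad_{JZ}²(JA) = ν₁·(JA). -/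
private lemma disj_split {L : Type*} [AddCommGroup L] [Module ℂ L]
    {mp mn : Submodule ℂ L} (hd : Disjoint mp mn)
    {x x' y y' : L} (hx : x ∈ mp) (hx' : x' ∈ mp) (hy : y ∈ mn) (hy' : y' ∈ mn)
    (h : x + y = x' + y') : x = x' ∧ y = y' := by
  have hdiff : x - x' = y' - y := by
    rw [sub_eq_sub_iff_add_eq_add, h, add_comm]
  have h1 : x - x' ∈ mp := sub_mem hx hx'
  have h2 : x - x' ∈ mn := hdiff ▸ sub_mem hy' hy
  have h0 : x - x' = 0 := by
    have := hd.le_bot ⟨h1, h2⟩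
    simpa using this
  exact ⟨sub_eq_zero.mp h0, (sub_eq_zero.mp (hdiff ▸ h0)).symm⟩

/-- If Z, A ∈ m satisfy ad_Z²(A) = ν₁·A and ad_{JZ}²(A) = ν₂·A, then
ad_Z²(JA) = ν₂·(JA) and ad_{JZ}²(JA) = ν₁·(JA). -/
theorem statement12
    (L : Type*) [LieRing L] [LieAlgebra ℂ L] [Module.Finite ℂ L]
    (k mp mn : Submodule ℂ L)
    (hsup : k ⊔ (mp ⊔ mn) = ⊤)
    (hd1 : Disjoint k (mp ⊔ mn))
    (hd2 : Disjoint mp mn)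
    (hkk : ∀ x ∈ k, ∀ y ∈ k, ⁅x, y⁆ ∈ k)
    (hkp : ∀ x ∈ k, ∀ y ∈ mp, ⁅x, y⁆ ∈ mp)
    (hkn : ∀ x ∈ k, ∀ y ∈ mn, ⁅x, y⁆ ∈ mn)
    (hpp : ∀ x ∈ mp, ∀ y ∈ mp, ⁅x, y⁆ = 0)
    (hnn : ∀ x ∈ mn, ∀ y ∈ mn, ⁅x, y⁆ = 0)
    (hpn : ∀ x ∈ mp, ∀ y ∈ mn, ⁅x, y⁆ ∈ k)
    (J : L →ₗ[ℂ] L)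
    (hJp : ∀ x ∈ mp, J x = Complex.I • x)
    (hJn : ∀ x ∈ mn, J x = -(Complex.I • x))
    (Z A : L) (hZ : Z ∈ mp ⊔ mn) (hA : A ∈ mp ⊔ mn)
    (ν₁ ν₂ : ℂ)
    (hν₁ : ⁅Z, ⁅Z, A⁆⁆ = ν₁ • A)
    (hν₂ : ⁅J Z, ⁅J Z, A⁆⁆ = ν₂ • A) :
    ⁅Z, ⁅Z, J A⁆⁆ = ν₂ • J A ∧ ⁅J Z, ⁅J Z, J A⁆⁆ = ν₁ • J A := by
  rw [Submodule.mem_sup] at hZ hA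
  obtain ⟨Zp, hZp, Zn, hZn, hZeq⟩ := hZ
  obtain ⟨Ap, hAp, An, hAn, hAeq⟩ := hA
  subst hZeq hAeq
  have hZpAp : ⁅Zp, Ap⁆ = 0 := hpp _ hZp _ hAp
  have hZnAn : ⁅Zn, An⁆ = 0 := hnn _ hZn _ hAn
  have hκ1k : ⁅Zp, An⁆ ∈ k := hpn _ hZp _ hAn
  have hκ2k : ⁅Zn, Ap⁆ ∈ k := by
    have h1 : ⁅Ap, Zn⁆ ∈ k := hpn _ hAp _ hZn
    have h' : ⁅Zn, Ap⁆ = -⁅Ap, Zn⁆ := by rw [lie_skew]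
    rw [h']; exact neg_mem h1
  have mem_p : ∀ κ ∈ k, ⁅Zp, κ⁆ ∈ mp := by
    intro κ hκ
    have h1 : ⁅κ, Zp⁆ ∈ mp := hkp _ hκ _ hZp
    have h' : ⁅Zp, κ⁆ = -⁅κ, Zp⁆ := by rw [lie_skew]
    rw [h']; exact neg_mem h1
  have mem_n : ∀ κ ∈ k, ⁅Zn, κ⁆ ∈ mn := by
    intro κ hκ
    have h1 : ⁅κ, Zn⁆ ∈ mn := hkn _ hκ _ hZn
    have h' : ⁅Zn, κ⁆ = -⁅κ, Zn⁆ := by rw [lie_skew]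
    rw [h']; exact neg_mem h1
  have hamp : ⁅Zp, ⁅Zp, An⁆⁆ ∈ mp := mem_p _ hκ1k
  have hbmp : ⁅Zp, ⁅Zn, Ap⁆⁆ ∈ mp := mem_p _ hκ2k
  have hcmn : ⁅Zn, ⁅Zp, An⁆⁆ ∈ mn := mem_n _ hκ1k
  have hdmn : ⁅Zn, ⁅Zn, Ap⁆⁆ ∈ mn := mem_n _ hκ2k
  have hJZ : J (Zp + Zn) = Complex.I • Zp - Complex.I • Zn := by
    rw [map_add, hJp _ hZp, hJn _ hZn]; abel
  have hJA : J (Ap + An) = Complex.I • Ap - Complex.I • An := by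
    rw [map_add, hJp _ hAp, hJn _ hAn]; abel
  have e1 : (⁅Zp, ⁅Zp, An⁆⁆ + ⁅Zp, ⁅Zn, Ap⁆⁆) + (⁅Zn, ⁅Zp, An⁆⁆ + ⁅Zn, ⁅Zn, Ap⁆⁆)
      = ν₁ • Ap + ν₁ • An := by
    have h := hν₁
    simp only [lie_add, add_lie, hZpAp, hZnAn, lie_zero, zero_lie, zero_add, add_zero,
      smul_add] at h
    linear_combination (norm := module) h
  have e2 : (-⁅Zp, ⁅Zp, An⁆⁆ + ⁅Zp, ⁅Zn, Ap⁆⁆) + (⁅Zn, ⁅Zp, An⁆⁆ - ⁅Zn, ⁅Zn, Ap⁆⁆)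
      = ν₂ • Ap + ν₂ • An := by
    have h := hν₂
    rw [hJZ] at h
    simp only [lie_add, add_lie, lie_sub, sub_lie, lie_smul, smul_lie, lie_neg, neg_lie,
      hZpAp, hZnAn, lie_zero, zero_lie, smul_zero, smul_sub, zero_sub, sub_zero, zero_add, add_zero,
      smul_add, smul_sub, smul_neg, neg_smul, smul_smul, Complex.I_mul_I, one_smul, neg_neg,
      sub_neg_eq_add] at h
    linear_combination (norm := module) h
  obtain ⟨f1, f2⟩ := disj_split hd2 (add_mem hamp hbmp) (Submodule.smul_mem _ _ hAp)
    (add_mem hcmn hdmn) (Submodule.smul_mem _ _ hAn) e1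
  obtain ⟨g1, g2⟩ := disj_split hd2 (add_mem (neg_mem hamp) hbmp) (Submodule.smul_mem _ _ hAp)
    (sub_mem hcmn hdmn) (Submodule.smul_mem _ _ hAn) e2
  constructor
  · rw [hJA]
    simp only [lie_add, add_lie, lie_sub, sub_lie, lie_smul, smul_lie, lie_neg, neg_lie,
      hZpAp, hZnAn, lie_zero, zero_lie, smul_zero, smul_sub, zero_sub, sub_zero, zero_add, add_zero]
    linear_combination (norm := module) Complex.I • g1 - Complex.I • g2
  · rw [hJZ, hJA]
    simp only [lie_add, add_lie, lie_sub, sub_lie, lie_smul, smul_lie, lie_neg, neg_lie,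
      hZpAp, hZnAn, lie_zero, zero_lie, smul_zero, smul_sub, zero_sub, sub_zero, zero_add, add_zero,
      smul_neg, neg_smul, smul_smul, Complex.I_mul_I, one_smul, neg_neg, sub_neg_eq_add]
    linear_combination (norm := module) Complex.I • f1 - Complex.I • f2
end

section
/- Let ℓ > 0 and c be real numbers, and set r = ½·arsinh(½(ℓ⁻¹+ℓ)·sinh(2c)) and s = ½·arctan(½(ℓ⁻¹-ℓ)·tanh(2c)). Then cosh(2c) = cosh(2r)·cos(2s) and ½(ℓ⁻¹-ℓ)·sinh(2c) = cosh(2r)·sin(2s). -/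
/-- For ℓ > 0 and c real, with r = ½ arsinh(½(ℓ⁻¹+ℓ)sinh 2c) and
s = ½ arctan(½(ℓ⁻¹-ℓ)tanh 2c), one has cosh 2c = cosh 2r · cos 2s and
½(ℓ⁻¹-ℓ)sinh 2c = cosh 2r · sin 2s. -/
theorem statement17 (ℓ c r s : ℝ) (hℓ : 0 < ℓ)
    (hr : r = Real.arsinh ((ℓ⁻¹ + ℓ) / 2 * Real.sinh (2 * c)) / 2)
    (hs : s = Real.arctan ((ℓ⁻¹ - ℓ) / 2 * Real.tanh (2 * c)) / 2) :
    Real.cosh (2 * c) = Real.cosh (2 * r) * Real.cos (2 * s) ∧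
    (ℓ⁻¹ - ℓ) / 2 * Real.sinh (2 * c) = Real.cosh (2 * r) * Real.sin (2 * s) := by
  set a : ℝ := (ℓ⁻¹ + ℓ) / 2 with ha
  set b : ℝ := (ℓ⁻¹ - ℓ) / 2 with hb
  set x : ℝ := a * Real.sinh (2 * c) with hx
  set y : ℝ := b * Real.tanh (2 * c) with hy
  have h2r : 2 * r = Real.arsinh x := by rw [hr]; ring
  have h2s : 2 * s = Real.arctan y := by rw [hs]; ring
  have hc0 : (0:ℝ) < Real.cosh (2 * c) := Real.cosh_pos (x := 2 * c)
  have hab : a ^ 2 = 1 + b ^ 2 := by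
    rw [ha, hb]; field_simp; ring
  have htanh : Real.tanh (2 * c) = Real.sinh (2 * c) / Real.cosh (2 * c) :=
    Real.tanh_eq_sinh_div_cosh _
  have hkey : Real.sqrt (1 + x ^ 2) = Real.cosh (2 * c) * Real.sqrt (1 + y ^ 2) := by
    rw [show Real.cosh (2 * c) = Real.sqrt (Real.cosh (2 * c) ^ 2) from
      (Real.sqrt_sq hc0.le).symm, ← Real.sqrt_mul (sq_nonneg _)]
    congr 1
    have hsc : Real.cosh (2 * c) ^ 2 = 1 + Real.sinh (2 * c) ^ 2 := by
      rw [Real.cosh_sq']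
    rw [hx, hy, htanh]
    field_simp
    nlinarith [hab, hsc]
  have hy1 : (0:ℝ) < Real.sqrt (1 + y ^ 2) := by positivity
  rw [h2r, h2s, Real.cosh_arsinh, Real.cos_arctan, Real.sin_arctan]
  constructor
  · rw [hkey]; field_simp
  · have h := hy1.ne'
    rw [hkey]
    rw [show Real.cosh (2 * c) * Real.sqrt (1 + y ^ 2) * (y / Real.sqrt (1 + y ^ 2)) =
      Real.cosh (2 * c) * y from by field_simp, hy, htanh]
    field_simp
end

section
/- Let λ ∈ ℂ with λ ≠ 0, write ℓ = |λ|, and let u ∈ ℂ with |u| = 1 and λ = ℓ·u². Let c ∈ ℝ and set r = ½·arsinh(½(ℓ⁻¹+ℓ)·sinh(2c)) and s = ½·arctan(½(ℓ⁻¹-ℓ)·tanh(2c)). Let D = diag(1,-1) and consider the 2×2 complex matrices X = [[0, cλ],[c/λ, 0]], Y = [[0, -s·u²],[s·conj(u)², 0]], and W = [[0, r·u²],[r·conj(u)², 0]]. Then exp(X)·D·exp(X)⁻¹ = exp(Y)·exp(W)·D·exp(W)⁻¹·exp(Y)⁻¹. -/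
set_option maxRecDepth 4000

open Matrix Complex

noncomputable section

lemma exp_decomp_s18 (Q Qi A : Matrix (Fin 2) (Fin 2) ℂ) (d0 d1 : ℂ)
    (hQ : Q * Qi = 1) (hA : A = Q * Matrix.diagonal ![d0, d1] * Qi) :
    NormedSpace.exp A = Q * Matrix.diagonal ![Complex.exp d0, Complex.exp d1] * Qi := by
  have hQi : Qi * Q = 1 := mul_eq_one_comm.mp hQ
  have hiu : IsUnit Q := ⟨⟨Q, Qi, hQ, hQi⟩, rfl⟩
  have hinv : Q⁻¹ = Qi := Matrix.inv_eq_right_inv hQ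
  have hpe : NormedSpace.exp (![d0, d1] : Fin 2 → ℂ) = ![Complex.exp d0, Complex.exp d1] := by
    funext i
    rw [Pi.coe_exp]
    fin_cases i <;> simp [← Complex.exp_eq_exp_ℂ]
  rw [hA, ← hinv, Matrix.exp_conj Q (Matrix.diagonal ![d0, d1]) hiu,
    Matrix.exp_diagonal, hpe, hinv]

lemma exp_decomp_inv (Q Qi A : Matrix (Fin 2) (Fin 2) ℂ) (d0 d1 : ℂ)
    (hQ : Q * Qi = 1) (hA : A = Q * Matrix.diagonal ![d0, d1] * Qi) :
    (NormedSpace.exp A)⁻¹ = Q * Matrix.diagonal ![Complex.exp (-d0), Complex.exp (-d1)] * Qi := by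
  rw [← Matrix.exp_neg]
  apply exp_decomp_s18 _ _ _ _ _ hQ
  rw [hA]
  have h : Matrix.diagonal (![-d0, -d1] : Fin 2 → ℂ) = -Matrix.diagonal ![d0, d1] := by
    rw [Matrix.diagonal_neg]
    congr 1
    funext i; fin_cases i <;> rfl
  rw [h, Matrix.mul_neg, Matrix.neg_mul]

lemma diag2 (d0 d1 : ℂ) : Matrix.diagonal ![d0, d1] = !![d0, 0; 0, d1] := by
  ext i j
  fin_cases i <;> fin_cases j <;> simp [Matrix.diagonal]

lemma exp_decomp' (Q Qi A : Matrix (Fin 2) (Fin 2) ℂ) (d0 d1 : ℂ)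
    (hQ : Q * Qi = 1) (hA : A = Q * !![d0, 0; 0, d1] * Qi) :
    NormedSpace.exp A = Q * !![Complex.exp d0, 0; 0, Complex.exp d1] * Qi := by
  rw [← diag2]
  exact exp_decomp_s18 Q Qi A d0 d1 hQ (by rwa [diag2])

lemma exp_decomp_inv' (Q Qi A : Matrix (Fin 2) (Fin 2) ℂ) (d0 d1 : ℂ)
    (hQ : Q * Qi = 1) (hA : A = Q * !![d0, 0; 0, d1] * Qi) :
    (NormedSpace.exp A)⁻¹ = Q * !![Complex.exp (-d0), 0; 0, Complex.exp (-d1)] * Qi := by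
  rw [← diag2]
  exact exp_decomp_inv Q Qi A d0 d1 hQ (by rwa [diag2])

set_option maxHeartbeats 2000000 in
/-- Let λ ≠ 0, ℓ = |λ|, u with |u| = 1 and λ = ℓu².  For c ∈ ℝ let
r = ½ arsinh(½(ℓ⁻¹+ℓ)sinh 2c) and s = ½ arctan(½(ℓ⁻¹-ℓ)tanh 2c), and set D = diag(1,-1),
X = [[0, cλ],[c/λ, 0]], Y = [[0, -su²],[s conj(u)², 0]], W = [[0, ru²],[r conj(u)², 0]].
Then exp X · D · (exp X)⁻¹ = exp Y · exp W · D · (exp W)⁻¹ · (exp Y)⁻¹. -/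
theorem statement18 (l u : ℂ) (hl : l ≠ 0) (hu : ‖u‖ = 1)
    (hlu : l = (‖l‖ : ℂ) * u ^ 2)
    (c r s : ℝ)
    (hr : r = Real.arsinh ((‖l‖⁻¹ + ‖l‖) / 2 * Real.sinh (2 * c)) / 2)
    (hs : s = Real.arctan ((‖l‖⁻¹ - ‖l‖) / 2 * Real.tanh (2 * c)) / 2)
    (D X Y W : Matrix (Fin 2) (Fin 2) ℂ)
    (hD : D = !![1, 0; 0, -1])
    (hX : X = !![0, (c : ℂ) * l; (c : ℂ) / l, 0])
    (hY : Y = !![0, -((s : ℂ) * u ^ 2); (s : ℂ) * (starRingEnd ℂ u) ^ 2, 0])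
    (hW : W = !![0, (r : ℂ) * u ^ 2; (r : ℂ) * (starRingEnd ℂ u) ^ 2, 0]) :
    NormedSpace.exp X * D * (NormedSpace.exp X)⁻¹ =
      NormedSpace.exp Y * (NormedSpace.exp W * D * (NormedSpace.exp W)⁻¹) *
        (NormedSpace.exp Y)⁻¹ := by
  have hL0 : (0:ℝ) < ‖l‖ := norm_pos_iff.mpr hl
  set L : ℝ := ‖l‖ with hLdef
  have hLne : (L:ℂ) ≠ 0 := by exact_mod_cast hL0.ne'
  have hu0 : u ≠ 0 := by
    intro h; rw [h] at hu; simp at hu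
  have hns : Complex.normSq u = 1 := by
    rw [Complex.normSq_eq_norm_sq, hu]; norm_num
  have huc : (starRingEnd ℂ) u = u⁻¹ := by
    rw [Complex.inv_def, hns]; simp
  -- real facts
  have hLr : L ≠ 0 := hL0.ne'
  set t : ℝ := (L⁻¹ - L)/2 * Real.tanh (2*c) with ht
  set x : ℝ := (L⁻¹ + L)/2 * Real.sinh (2*c) with hx
  have h2r : (2:ℝ)*r = Real.arsinh x := by rw [hr]; ring
  have h2s : (2:ℝ)*s = Real.arctan t := by rw [hs]; ring
  have hs2r : Real.sinh (2*r) = x := by rw [h2r, Real.sinh_arsinh]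
  have hc2r : Real.cosh (2*r) = Real.sqrt (1+x^2) := by rw [h2r, Real.cosh_arsinh]
  have hcs : Real.cos (2*s) = 1/Real.sqrt (1+t^2) := by rw [h2s, Real.cos_arctan]
  have hsn : Real.sin (2*s) = t/Real.sqrt (1+t^2) := by rw [h2s, Real.sin_arctan]
  have hch0 : Real.cosh (2*c) ≠ 0 := (Real.cosh_pos _).ne'
  have key : 1 + x^2 = Real.cosh (2*c)^2 * (1+t^2) := by
    rw [hx, ht, Real.tanh_eq_sinh_div_cosh]
    have hcsq : Real.cosh (2*c)^2 = 1 + Real.sinh (2*c)^2 := Real.cosh_sq' _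
    field_simp
    linear_combination (-4*L^2) * hcsq
  have hsqt : (0:ℝ) < Real.sqrt (1+t^2) := Real.sqrt_pos.mpr (by positivity)
  have hkey2 : Real.sqrt (1+x^2) = Real.cosh (2*c) * Real.sqrt (1+t^2) := by
    rw [key, Real.sqrt_mul (sq_nonneg _), Real.sqrt_sq (Real.cosh_pos _).le]
  have E1 : Real.cos (2*s) * Real.cosh (2*r) = Real.cosh (2*c) := by
    rw [hcs, hc2r, hkey2]
    field_simp
  have E2 : Real.sin (2*s) * Real.cosh (2*r) = (L⁻¹-L)/2 * Real.sinh (2*c) := by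
    rw [hsn, hc2r, hkey2, ht, Real.tanh_eq_sinh_div_cosh]
    field_simp
  have f1 : (Real.cos s^2 - Real.sin s^2) * (Real.cosh r^2 + Real.sinh r^2)
      = Real.cosh c^2 + Real.sinh c^2 := by
    have a1 := Real.cos_two_mul s
    have a2 := Real.cosh_two_mul r
    have a3 := Real.cosh_two_mul c
    have a4 := Real.cos_sq_add_sin_sq s
    linear_combination E1 + a3 - Real.cos (2*s) * a2
      - (Real.cosh r^2 + Real.sinh r^2) * a1 - (Real.cosh r^2 + Real.sinh r^2) * a4
  have f2 : (2*Real.sin s*Real.cos s) * (Real.cosh r^2 + Real.sinh r^2)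
      = (L⁻¹ - L) * (Real.sinh c * Real.cosh c) := by
    have a2 := Real.cosh_two_mul r
    have b1 := Real.sin_two_mul s
    have b3 := Real.sinh_two_mul c
    linear_combination E2 + (L⁻¹-L)/2 * b3 - Real.sin (2*s) * a2
      - (Real.cosh r^2 + Real.sinh r^2) * b1
  have f3 : 2*(Real.sinh r * Real.cosh r) = (L⁻¹ + L) * (Real.sinh c * Real.cosh c) := by
    linear_combination hs2r - Real.sinh_two_mul r + (L⁻¹+L)/2 * Real.sinh_two_mul c
  have F1 : ((Complex.cos s)^2 - (Complex.sin s)^2) * ((Complex.cosh r)^2 + (Complex.sinh r)^2)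
      = (Complex.cosh c)^2 + (Complex.sinh c)^2 := by exact_mod_cast congrArg (Complex.ofReal) f1
  have F2 : (2*(Complex.sin s)*(Complex.cos s)) * ((Complex.cosh r)^2 + (Complex.sinh r)^2)
      = ((L:ℂ)⁻¹ - (L:ℂ)) * ((Complex.sinh c) * (Complex.cosh c)) := by
    exact_mod_cast congrArg (Complex.ofReal) f2
  have F3 : 2*((Complex.sinh r) * (Complex.cosh r))
      = ((L:ℂ)⁻¹ + (L:ℂ)) * ((Complex.sinh c) * (Complex.cosh c)) := by
    exact_mod_cast congrArg (Complex.ofReal) f3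
  -- X
  have hQx : (!![(L:ℂ)*u^2, -((L:ℂ)*u^2); 1, 1]) * !![(2*(L:ℂ)*u^2)⁻¹, 1/2; -((2*(L:ℂ)*u^2)⁻¹), 1/2] = 1 := by
    ext i j
    fin_cases i <;> fin_cases j <;>
      (simp [Matrix.mul_apply, Fin.sum_univ_two] <;> field_simp <;> try ring)
  have hXd : X = (!![(L:ℂ)*u^2, -((L:ℂ)*u^2); 1, 1]) * !![((c:ℝ):ℂ), 0; 0, -((c:ℝ):ℂ)] * !![(2*(L:ℂ)*u^2)⁻¹, 1/2; -((2*(L:ℂ)*u^2)⁻¹), 1/2] := by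
    rw [hX, hlu]
    ext i j
    fin_cases i <;> fin_cases j <;>
      (simp [Matrix.mul_apply, Fin.sum_univ_two] <;> field_simp <;> try ring)
  have mX : NormedSpace.exp X
      = !![Complex.cosh c, (L:ℂ)*u^2*Complex.sinh c;
            (L:ℂ)⁻¹*(u⁻¹)^2*Complex.sinh c, Complex.cosh c] := by
    rw [exp_decomp' _ _ _ _ _ hQx hXd]
    ext i j
    fin_cases i <;> fin_cases j <;>
      (simp [Matrix.mul_apply, Fin.sum_univ_two, Complex.cosh, Complex.sinh] <;>
        field_simp <;> try ring)
  have mXi : (NormedSpace.exp X)⁻¹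
      = !![Complex.cosh c, -((L:ℂ)*u^2*Complex.sinh c);
            -((L:ℂ)⁻¹*(u⁻¹)^2*Complex.sinh c), Complex.cosh c] := by
    rw [exp_decomp_inv' _ _ _ _ _ hQx hXd]
    ext i j
    fin_cases i <;> fin_cases j <;>
      (simp [Matrix.mul_apply, Fin.sum_univ_two, Complex.cosh, Complex.sinh] <;>
        field_simp <;> try ring)
  -- W
  have hQw : (!![u, -u; u⁻¹, u⁻¹]) * !![u⁻¹/2, u/2; -(u⁻¹/2), u/2] = 1 := by
    ext i j
    fin_cases i <;> fin_cases j <;>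
      (simp [Matrix.mul_apply, Fin.sum_univ_two] <;> field_simp <;> try ring)
  have hWd : W = (!![u, -u; u⁻¹, u⁻¹]) * !![((r:ℝ):ℂ), 0; 0, -((r:ℝ):ℂ)] * !![u⁻¹/2, u/2; -(u⁻¹/2), u/2] := by
    rw [hW, huc]
    ext i j
    fin_cases i <;> fin_cases j <;>
      (simp [Matrix.mul_apply, Fin.sum_univ_two] <;> field_simp <;> try ring)
  have mW : NormedSpace.exp W
      = !![Complex.cosh r, u^2*Complex.sinh r;
            (u⁻¹)^2*Complex.sinh r, Complex.cosh r] := by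
    rw [exp_decomp' _ _ _ _ _ hQw hWd]
    ext i j
    fin_cases i <;> fin_cases j <;>
      (simp [Matrix.mul_apply, Fin.sum_univ_two, Complex.cosh, Complex.sinh] <;>
        field_simp <;> try ring)
  have mWi : (NormedSpace.exp W)⁻¹
      = !![Complex.cosh r, -(u^2*Complex.sinh r);
            -((u⁻¹)^2*Complex.sinh r), Complex.cosh r] := by
    rw [exp_decomp_inv' _ _ _ _ _ hQw hWd]
    ext i j
    fin_cases i <;> fin_cases j <;>
      (simp [Matrix.mul_apply, Fin.sum_univ_two, Complex.cosh, Complex.sinh] <;>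
        field_simp <;> try ring)
  -- Y
  have hQy : (!![Complex.I*u, -(Complex.I*u); u⁻¹, u⁻¹]) * !![-(Complex.I*u⁻¹)/2, u/2; (Complex.I*u⁻¹)/2, u/2] = 1 := by
    ext i j
    fin_cases i <;> fin_cases j <;>
      (simp [Matrix.mul_apply, Fin.sum_univ_two] <;> field_simp <;> ring_nf <;>
        simp [Complex.I_sq] <;> try ring)
  have hYd : Y = (!![Complex.I*u, -(Complex.I*u); u⁻¹, u⁻¹]) * !![(s:ℂ)*Complex.I, 0; 0, -((s:ℂ)*Complex.I)] * !![-(Complex.I*u⁻¹)/2, u/2; (Complex.I*u⁻¹)/2, u/2] := by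
    rw [hY, huc]
    ext i j
    fin_cases i <;> fin_cases j <;>
      (simp [Matrix.mul_apply, Fin.sum_univ_two] <;> field_simp <;> ring_nf <;>
        simp [Complex.I_sq] <;> try ring)
  have mY : NormedSpace.exp Y
      = !![Complex.cos s, -(u^2*Complex.sin s);
            (u⁻¹)^2*Complex.sin s, Complex.cos s] := by
    rw [exp_decomp' _ _ _ _ _ hQy hYd]
    ext i j
    fin_cases i <;> fin_cases j <;>
      (simp [Matrix.mul_apply, Fin.sum_univ_two, Complex.cos, Complex.sin] <;>
        field_simp <;> ring_nf <;> simp [Complex.I_sq] <;> try ring)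
  have mYi : (NormedSpace.exp Y)⁻¹
      = !![Complex.cos s, u^2*Complex.sin s;
            -((u⁻¹)^2*Complex.sin s), Complex.cos s] := by
    rw [exp_decomp_inv' _ _ _ _ _ hQy hYd]
    ext i j
    fin_cases i <;> fin_cases j <;>
      (simp [Matrix.mul_apply, Fin.sum_univ_two, Complex.cos, Complex.sin] <;>
        field_simp <;> ring_nf <;> simp [Complex.I_sq] <;> try ring)
  have hv : (u:ℂ)^2 * ((u:ℂ)^2)⁻¹ = 1 := mul_inv_cancel₀ (pow_ne_zero 2 hu0)
  have hL2 : (L:ℂ) * ((L:ℂ))⁻¹ = 1 := mul_inv_cancel₀ hLne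
  have F4 : Complex.cos (s:ℂ)^2 + Complex.sin (s:ℂ)^2 = 1 := Complex.cos_sq_add_sin_sq _
  rw [hD, mXi, mYi, mWi, mX, mY, mW]
  ext i j
  fin_cases i <;> fin_cases j <;>
    simp [Matrix.mul_apply, Fin.sum_univ_two]
  · linear_combination (-1 : ℂ)*F1
      + (Complex.sinh (r:ℂ)^2*Complex.sin (s:ℂ)^2 - Complex.sinh (r:ℂ)^2*Complex.cos (s:ℂ)^2
        + Complex.cosh (r:ℂ)^2*Complex.sin (s:ℂ)^2 + (L:ℂ)*((L:ℂ))⁻¹*Complex.sinh (c:ℂ)^2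
        + u^2*((u:ℂ)^2)⁻¹*Complex.sinh (r:ℂ)^2*Complex.sin (s:ℂ)^2)*hv
      + Complex.sinh (c:ℂ)^2*hL2
  · linear_combination (-(u^2))*F2 + u^2*F3
      + (-2*u^2*Complex.sinh (r:ℂ)^2*Complex.cos (s:ℂ)*Complex.sin (s:ℂ)
        + 2*u^2*Complex.cosh (r:ℂ)*Complex.sinh (r:ℂ)*Complex.sin (s:ℂ)^2)*hv
      + (2*u^2*Complex.cosh (r:ℂ)*Complex.sinh (r:ℂ))*F4
  · linear_combination (-((u:ℂ)^2)⁻¹)*F2 + (-((u:ℂ)^2)⁻¹)*F3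
      + (-2*((u:ℂ)^2)⁻¹*Complex.sinh (r:ℂ)^2*Complex.cos (s:ℂ)*Complex.sin (s:ℂ)
        - 2*((u:ℂ)^2)⁻¹*Complex.cosh (r:ℂ)*Complex.sinh (r:ℂ)*Complex.sin (s:ℂ)^2)*hv
      + (-2*((u:ℂ)^2)⁻¹*Complex.cosh (r:ℂ)*Complex.sinh (r:ℂ))*F4
  · linear_combination F1
      + (-(Complex.sinh (r:ℂ)^2*Complex.sin (s:ℂ)^2) + Complex.sinh (r:ℂ)^2*Complex.cos (s:ℂ)^2
        - Complex.cosh (r:ℂ)^2*Complex.sin (s:ℂ)^2 - (L:ℂ)*((L:ℂ))⁻¹*Complex.sinh (c:ℂ)^2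
        - u^2*((u:ℂ)^2)⁻¹*Complex.sinh (r:ℂ)^2*Complex.sin (s:ℂ)^2)*hv
      + (-(Complex.sinh (c:ℂ)^2))*hL2
end
end
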